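/- Genus-0 two-part double Hurwitz number: for positive integers a, b, c, d with a + b = c + d and c < min(a,b) (hence d > max(a,b)), H_0((a,b),(c,d)) = 2d, where H_0((a,b),(c,d)) is defined as the normalized count of transitive factorizations (σ_1, τ_1, τ_2, σ_2) in S_{a+b} with σ_1 of cycle type (a,b) with labelled cycles, σ_2 of cycle type (c,d) with labelled cycles, τ_1, τ_2 transpositions, and σ_2 τ_2 τ_1 σ_1 = id, divided by (a+b)!. -/

import Mathlib

open Equiv Equiv.Perm Finset
set_option linter.unusedSectionVars false
set_option linter.unnecessarySimpa false
set_option linter.unusedVariables false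

variable {α : Type*} [Fintype α] [DecidableEq α]

lemma sc_iff_pow {f : Perm α} {x y : α} : f.SameCycle x y ↔ ∃ i : ℕ, (f ^ i) x = y := by
  constructor
  · intro h; obtain ⟨i, -, h⟩ := h.exists_pow_eq'; exact ⟨i, h⟩
  · rintro ⟨i, h⟩; exact ⟨(i : ℤ), by simpa using h⟩

lemma mapsTo_pow {f : Perm α} {T : Finset α} (hT : ∀ z ∈ T, f z ∈ T) :
    ∀ (k : ℕ), ∀ z ∈ T, (f ^ k) z ∈ T := by
  intro k
  induction k with
  | zero => simpa using fun z h => h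
  | succ n ih =>
      intro z hz
      rw [pow_succ, Perm.mul_apply]
      exact ih _ (hT z hz)

lemma closed_sameCycle {f : Perm α} {T : Finset α} (hT : ∀ z ∈ T, f z ∈ T) {z w : α}
    (hz : z ∈ T) (h : f.SameCycle z w) : w ∈ T := by
  obtain ⟨i, rfl⟩ := sc_iff_pow.mp h
  exact mapsTo_pow hT i z hz

lemma agree_pow {f g : Perm α} {T : Finset α} (hfg : ∀ z ∈ T, g z = f z)
    (hT : ∀ z ∈ T, f z ∈ T) : ∀ (k : ℕ), ∀ z ∈ T, (g ^ k) z = (f ^ k) z := by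
  intro k
  induction k with
  | zero => simp
  | succ n ih =>
      intro z hz
      rw [pow_succ', pow_succ', Perm.mul_apply, Perm.mul_apply, ih z hz,
        hfg _ (mapsTo_pow hT n z hz)]

lemma agree_sameCycle {f g : Perm α} {T : Finset α} (hfg : ∀ z ∈ T, g z = f z)
    (hT : ∀ z ∈ T, f z ∈ T) {z w : α} (hz : z ∈ T) :
    g.SameCycle z w ↔ f.SameCycle z w := by
  have hT' : ∀ z ∈ T, g z ∈ T := fun z h => by rw [hfg z h]; exact hT z h
  constructor
  · intro h
    obtain ⟨i, rfl⟩ := sc_iff_pow.mp h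
    rw [agree_pow hfg hT i z hz]
    exact sc_iff_pow.mpr ⟨i, rfl⟩
  · intro h
    obtain ⟨i, rfl⟩ := sc_iff_pow.mp h
    rw [← agree_pow hfg hT i z hz]
    exact sc_iff_pow.mpr ⟨i, rfl⟩

lemma bijOn_of_mapsTo {f : Perm α} {T : Finset α} (hT : ∀ z ∈ T, f z ∈ T) :
    Set.BijOn f T T :=
  (T.finite_toSet.injOn_iff_bijOn_of_mapsTo (fun z hz => hT z hz)).mp f.injective.injOn

lemma agree_isCycleOn {f g : Perm α} {T : Finset α} (hfg : ∀ z ∈ T, g z = f z)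
    (hT : ∀ z ∈ T, f z ∈ T) (h : f.IsCycleOn T) : g.IsCycleOn T := by
  refine ⟨bijOn_of_mapsTo (fun z hz => by rw [hfg z hz]; exact hT z hz), ?_⟩
  intro x hx y hy
  exact (agree_sameCycle hfg hT hx).mpr (h.2 hx hy)

lemma isCycleOn_mem_of_sameCycle {f : Perm α} {T : Finset α} (h : f.IsCycleOn T)
    {z w : α} (hz : z ∈ T) (hsc : f.SameCycle z w) : w ∈ T :=
  closed_sameCycle (fun x hx => h.1.mapsTo hx) hz hsc

lemma isCycleOn_eq_image {f : Perm α} {S : Finset α} (hS : f.IsCycleOn S) {u : α}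
    (hu : u ∈ S) : S = Finset.image (fun j => (f ^ j) u) (range #S) := by
  apply Finset.Subset.antisymm
  · intro z hz
    obtain ⟨i, hi, hiz⟩ := hS.exists_pow_eq hu hz
    exact Finset.mem_image.mpr ⟨i, Finset.mem_range.mpr hi, hiz⟩
  · intro z hz
    obtain ⟨j, -, rfl⟩ := Finset.mem_image.mp hz
    exact mapsTo_pow (fun w hw => hS.1.mapsTo hw) j u hu

lemma pow_window_inj {f : Perm α} {S : Finset α} (hS : f.IsCycleOn S) {u : α} (hu : u ∈ S)
    {i j : ℕ} (hi : i < #S) (hj : j < #S) (h : (f ^ i) u = (f ^ j) u) : i = j := by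
  have h2 := (hS.pow_apply_eq_pow_apply hu).mp h
  have hi' : i % #S = i := Nat.mod_eq_of_lt hi
  have hj' : j % #S = j := Nat.mod_eq_of_lt hj
  rwa [Nat.ModEq, hi', hj'] at h2

lemma pow_ne_self {f : Perm α} {S : Finset α} (hS : f.IsCycleOn S) {u : α} (hu : u ∈ S)
    {t : ℕ} (ht0 : 0 < t) (htm : t < #S) : (f ^ t) u ≠ u := by
  intro h
  have := Nat.le_of_dvd ht0 ((hS.pow_apply_eq hu).mp h)
  omega

lemma merge_chain {f : Perm α} {P Q : Finset α} (hP : f.IsCycleOn P) (hd : Disjoint P Q)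
    {u v : α} (hu : u ∈ P) (hv : v ∈ Q) :
    ∀ z ∈ P, (f * swap u v).SameCycle v z := by
  set g := f * swap u v with hg
  have huv : u ≠ v := fun h => (Finset.disjoint_left.mp hd hu) (h ▸ hv)
  have hgv : g v = f u := by simp [hg, Perm.mul_apply]
  have hgz : ∀ z, z ≠ u → z ≠ v → g z = f z := by
    intro z h1 h2; simp [hg, Perm.mul_apply, swap_apply_of_ne_of_ne h1 h2]
  have key : ∀ i, i < #P → (g ^ (i + 1)) v = (f ^ (i + 1)) u := by
    intro i
    induction i with
    | zero => intro _; simpa using hgv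
    | succ n ih =>
        intro hn
        have hfn : (f ^ (n + 1)) u ∈ P := mapsTo_pow (fun w hw => hP.1.mapsTo hw) (n + 1) u hu
        have h2 : (f ^ (n + 1)) u ≠ u :=
          pow_ne_self hP hu (Nat.succ_pos n) (by omega)
        have h3 : (f ^ (n + 1)) u ≠ v := fun h => (Finset.disjoint_left.mp hd (h ▸ hfn)) hv
        rw [pow_succ' g, Perm.mul_apply, ih (by omega), hgz _ h2 h3, ← Perm.mul_apply,
          ← pow_succ']
  intro z hz
  obtain ⟨i, hi, hiz⟩ := hP.exists_pow_eq hu hz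
  rcases Nat.eq_zero_or_pos i with h0 | h0
  · have hc : 0 < #P := Finset.card_pos.mpr ⟨u, hu⟩
    have hkey := key (#P - 1) (by omega)
    rw [Nat.sub_add_cancel hc] at hkey
    refine sc_iff_pow.mpr ⟨#P, ?_⟩
    rw [hkey, hP.pow_card_apply hu]
    subst h0; simpa using hiz
  · obtain ⟨j, rfl⟩ : ∃ j, i = j + 1 := ⟨i - 1, by omega⟩
    exact sc_iff_pow.mpr ⟨j + 1, by rw [key j (by omega)]; exact hiz⟩

lemma merge_isCycleOn {f : Perm α} {P Q : Finset α} (hP : f.IsCycleOn P) (hQ : f.IsCycleOn Q)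
    (hd : Disjoint P Q) {u v : α} (hu : u ∈ P) (hv : v ∈ Q) :
    (f * swap u v).IsCycleOn (P ∪ Q : Finset α) := by
  have huv : u ≠ v := fun h => (Finset.disjoint_left.mp hd hu) (h ▸ hv)
  have hchainP : ∀ z ∈ P, (f * swap u v).SameCycle v z := merge_chain hP hd hu hv
  have hchainQ : ∀ z ∈ Q, (f * swap u v).SameCycle u z := by
    have := merge_chain hQ hd.symm hv hu
    simpa [swap_comm v u] using this
  have hscuv : (f * swap u v).SameCycle v u := hchainP u hu
  have hmt : ∀ z ∈ P ∪ Q, (f * swap u v) z ∈ P ∪ Q := by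
    intro z hz
    rcases eq_or_ne u z with rfl | hzu
    · have h1 : (f * swap u v) u = f v := by simp [Perm.mul_apply]
      rw [h1]; exact Finset.mem_union_right _ (hQ.1.mapsTo hv)
    rcases eq_or_ne v z with rfl | hzv
    · have h1 : (f * swap u v) v = f u := by simp [Perm.mul_apply]
      rw [h1]; exact Finset.mem_union_left _ (hP.1.mapsTo hu)
    · have h1 : (f * swap u v) z = f z := by
        simp [Perm.mul_apply, swap_apply_of_ne_of_ne hzu.symm hzv.symm]
      rw [h1]
      rcases Finset.mem_union.mp hz with h | h
      · exact Finset.mem_union_left _ (hP.1.mapsTo h)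
      · exact Finset.mem_union_right _ (hQ.1.mapsTo h)
  refine ⟨bijOn_of_mapsTo hmt, ?_⟩
  intro x hx y hy
  rw [Finset.coe_union, Set.mem_union] at hx hy
  have hx' : (f * swap u v).SameCycle v x := by
    rcases hx with h | h
    · exact hchainP x h
    · exact hscuv.trans (hchainQ x h)
  have hy' : (f * swap u v).SameCycle v y := by
    rcases hy with h | h
    · exact hchainP y h
    · exact hscuv.trans (hchainQ y h)
  exact hx'.symm.trans hy'

/-! ### Split surgery -/

def part1 (f : Perm α) (u : α) (t : ℕ) : Finset α :=
  Finset.image (fun j => (f ^ (j + 1)) u) (range t)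

def part2 (f : Perm α) (u : α) (t m : ℕ) : Finset α :=
  Finset.image (fun j => (f ^ (t + 1 + j)) u) (range (m - t))

lemma pow_shift_inj {f : Perm α} {S : Finset α} (hS : f.IsCycleOn S) {u : α} (hu : u ∈ S)
    (e0 : ℕ) {i j : ℕ} (hi : i < #S) (hj : j < #S) (h : (f ^ (e0 + i)) u = (f ^ (e0 + j)) u) :
    i = j := by
  have h2 := (hS.pow_apply_eq_pow_apply hu).mp h
  have h3 : i ≡ j [MOD #S] := Nat.ModEq.add_left_cancel' e0 h2
  rwa [Nat.ModEq, Nat.mod_eq_of_lt hi, Nat.mod_eq_of_lt hj] at h3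

section Split

variable {f : Perm α} {S : Finset α} {u : α} {t : ℕ}

lemma part1_card (hS : f.IsCycleOn S) (hu : u ∈ S) (htm : t < #S) : #(part1 f u t) = t := by
  rw [part1, Finset.card_image_of_injOn, card_range]
  intro i hi j hj h
  simp only [Finset.coe_range, Set.mem_Iio] at hi hj
  have := pow_shift_inj hS hu 1 (by omega : i < #S) (by omega : j < #S)
    (by rw [Nat.add_comm 1 i, Nat.add_comm 1 j] at *; exact h)
  omega

lemma part2_card (hS : f.IsCycleOn S) (hu : u ∈ S) : #(part2 f u t #S) = #S - t := by
  rw [part2, Finset.card_image_of_injOn, card_range]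
  intro i hi j hj h
  simp only [Finset.coe_range, Set.mem_Iio] at hi hj
  exact pow_shift_inj hS hu (t + 1) (by omega) (by omega) h

lemma part_subset (hS : f.IsCycleOn S) (hu : u ∈ S) :
    part1 f u t ⊆ S ∧ part2 f u t #S ⊆ S := by
  constructor <;>
  · intro z hz
    obtain ⟨j, -, rfl⟩ := Finset.mem_image.mp hz
    exact mapsTo_pow (fun w hw => hS.1.mapsTo hw) _ u hu

lemma part_union (hS : f.IsCycleOn S) (hu : u ∈ S) (htm : t < #S) :
    part1 f u t ∪ part2 f u t #S = S := by
  apply Finset.Subset.antisymm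
  · exact Finset.union_subset (part_subset hS hu).1 (part_subset hS hu).2
  · intro z hz
    obtain ⟨i, hi, rfl⟩ := hS.exists_pow_eq hu hz
    rcases Nat.lt_or_ge i 1 with h0 | h1
    · apply Finset.mem_union_right
      refine Finset.mem_image.mpr ⟨#S - t - 1, Finset.mem_range.mpr (by omega), ?_⟩
      rw [show t + 1 + (#S - t - 1) = #S by omega, hS.pow_card_apply hu]
      interval_cases i
      simp
    rcases Nat.lt_or_ge t i with h2 | h2
    · exact Finset.mem_union_right _ (Finset.mem_image.mpr
        ⟨i - t - 1, Finset.mem_range.mpr (by omega), by rw [show t + 1 + (i - t - 1) = i by omega]⟩)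
    · exact Finset.mem_union_left _ (Finset.mem_image.mpr
        ⟨i - 1, Finset.mem_range.mpr (by omega), by rw [show i - 1 + 1 = i by omega]⟩)

lemma part_disjoint (hS : f.IsCycleOn S) (hu : u ∈ S) (ht0 : 0 < t) (htm : t < #S) :
    Disjoint (part1 f u t) (part2 f u t #S) := by
  rw [Finset.disjoint_left]
  rintro z hz1 hz2
  obtain ⟨i, hi, rfl⟩ := Finset.mem_image.mp hz1
  obtain ⟨j, hj, he⟩ := Finset.mem_image.mp hz2
  rw [Finset.mem_range] at hi hj
  have h2 := (hS.pow_apply_eq_pow_apply hu).mp he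
  have hi1 : (i + 1) % #S = i + 1 := Nat.mod_eq_of_lt (by omega)
  rcases Nat.lt_or_ge (t + 1 + j) #S with h | h
  · rw [Nat.ModEq, Nat.mod_eq_of_lt h, hi1] at h2; omega
  · have h3 : t + 1 + j = #S := by omega
    rw [Nat.ModEq, h3, Nat.mod_self, hi1] at h2; omega

lemma mem_part1_self (ht0 : 0 < t) : (f ^ t) u ∈ part1 f u t :=
  Finset.mem_image.mpr ⟨t - 1, Finset.mem_range.mpr (by omega),
    by rw [show t - 1 + 1 = t by omega]⟩

lemma mem_part2_self (hS : f.IsCycleOn S) (hu : u ∈ S) (htm : t < #S) :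
    u ∈ part2 f u t #S :=
  Finset.mem_image.mpr ⟨#S - t - 1, Finset.mem_range.mpr (by omega),
    by rw [show t + 1 + (#S - t - 1) = #S by omega, hS.pow_card_apply hu]⟩

lemma split_offcycle (ht0 : 0 < t) :
    ∀ z, z ≠ u → z ≠ (f ^ t) u → (f * swap u ((f ^ t) u)) z = f z := by
  intro z h1 h2
  simp [Perm.mul_apply, swap_apply_of_ne_of_ne h1 h2]

lemma split_isCycleOn_part1 (hS : f.IsCycleOn S) (hu : u ∈ S) (ht0 : 0 < t) (htm : t < #S) :
    (f * swap u ((f ^ t) u)).IsCycleOn (part1 f u t) := by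
  set v := (f ^ t) u with hv
  set g := f * swap u v with hg
  have hgv : g v = f u := by simp [hg, Perm.mul_apply]
  have hvne : ∀ j, 0 < j → j < t → (f ^ j) u ≠ v := by
    intro j hj0 hjt h
    have := pow_window_inj hS hu (by omega : j < #S) htm h
    omega
  have hune : ∀ j, 0 < j → j < #S → (f ^ j) u ≠ u := fun j h1 h2 => pow_ne_self hS hu h1 h2
  have hstep : ∀ j, 0 < j → j < t → g ((f ^ j) u) = (f ^ (j + 1)) u := by
    intro j h1 h2
    rw [split_offcycle ht0 _ (hune j h1 (by omega)) (hvne j h1 h2), ← Perm.mul_apply,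
      ← pow_succ']
  have hchain : ∀ j, j < t → (g ^ j) (f u) = (f ^ (j + 1)) u := by
    intro j
    induction j with
    | zero => intro _; simp
    | succ n ih =>
        intro hn
        rw [pow_succ' g, Perm.mul_apply, ih (by omega), hstep (n + 1) (by omega) hn]
  have hmt : ∀ z ∈ part1 f u t, g z ∈ part1 f u t := by
    intro z hz
    obtain ⟨j, hj, rfl⟩ := Finset.mem_image.mp hz
    rw [Finset.mem_range] at hj
    rcases Nat.lt_or_ge (j + 1) t with h | h
    · rw [hstep (j + 1) (by omega) h]
      exact Finset.mem_image.mpr ⟨j + 1, Finset.mem_range.mpr h, rfl⟩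
    · have hjt : j + 1 = t := by omega
      rw [hjt, ← hv, hgv]
      exact Finset.mem_image.mpr ⟨0, Finset.mem_range.mpr ht0, by simp⟩
  refine ⟨bijOn_of_mapsTo hmt, ?_⟩
  intro x hx y hy
  rw [Finset.mem_coe] at hx hy
  obtain ⟨i, hi, rfl⟩ := Finset.mem_image.mp hx
  obtain ⟨j, hj, rfl⟩ := Finset.mem_image.mp hy
  rw [Finset.mem_range] at hi hj
  have h1 : g.SameCycle (f u) ((f ^ (i + 1)) u) := sc_iff_pow.mpr ⟨i, hchain i hi⟩
  have h2 : g.SameCycle (f u) ((f ^ (j + 1)) u) := sc_iff_pow.mpr ⟨j, hchain j hj⟩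
  exact h1.symm.trans h2

lemma split_isCycleOn_part2 (hS : f.IsCycleOn S) (hu : u ∈ S) (ht0 : 0 < t) (htm : t < #S) :
    (f * swap u ((f ^ t) u)).IsCycleOn (part2 f u t #S) := by
  set v := (f ^ t) u with hv
  set g := f * swap u v with hg
  have hgu : g u = (f ^ (t + 1)) u := by
    simp only [hg, Perm.mul_apply, swap_apply_left]
    rw [← Perm.mul_apply, ← pow_succ']
  have hvne : ∀ j, t < j → j < #S → (f ^ j) u ≠ v := by
    intro j hj0 hjt h
    have := pow_window_inj hS hu (by omega : j < #S) htm h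
    omega
  have hune : ∀ j, 0 < j → j < #S → (f ^ j) u ≠ u := fun j h1 h2 => pow_ne_self hS hu h1 h2
  have hstep : ∀ j, t < j → j < #S → g ((f ^ j) u) = (f ^ (j + 1)) u := by
    intro j h1 h2
    rw [split_offcycle ht0 _ (hune j (by omega) h2) (hvne j h1 h2), ← Perm.mul_apply,
      ← pow_succ']
  have hchain : ∀ j, j < #S - t → (g ^ (j + 1)) u = (f ^ (t + 1 + j)) u := by
    intro j
    induction j with
    | zero => intro _; simpa using hgu
    | succ n ih =>
        intro hn
        rw [pow_succ' g, Perm.mul_apply, ih (by omega),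
          show t + 1 + (n + 1) = (t + 1 + n) + 1 by omega]
        exact hstep (t + 1 + n) (by omega) (by omega)
  have hmt : ∀ z ∈ part2 f u t #S, g z ∈ part2 f u t #S := by
    intro z hz
    obtain ⟨j, hj, rfl⟩ := Finset.mem_image.mp hz
    rw [Finset.mem_range] at hj
    rcases Nat.lt_or_ge (t + 1 + j) #S with h | h
    · rw [hstep (t + 1 + j) (by omega) h]
      exact Finset.mem_image.mpr ⟨j + 1, Finset.mem_range.mpr (by omega),
        by rw [show t + 1 + (j + 1) = t + 1 + j + 1 by omega]⟩
    · have hjm : t + 1 + j = #S := by omega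
      rw [hjm, hS.pow_card_apply hu, hgu]
      exact Finset.mem_image.mpr ⟨0, Finset.mem_range.mpr (by omega), by simp⟩
  refine ⟨bijOn_of_mapsTo hmt, ?_⟩
  intro x hx y hy
  rw [Finset.mem_coe] at hx hy
  obtain ⟨i, hi, rfl⟩ := Finset.mem_image.mp hx
  obtain ⟨j, hj, rfl⟩ := Finset.mem_image.mp hy
  rw [Finset.mem_range] at hi hj
  have h1 : g.SameCycle u ((f ^ (t + 1 + i)) u) := sc_iff_pow.mpr ⟨i + 1, hchain i hi⟩
  have h2 : g.SameCycle u ((f ^ (t + 1 + j)) u) := sc_iff_pow.mpr ⟨j + 1, hchain j hj⟩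
  exact h1.symm.trans h2

end Split

/-! ### Pinned definitions -/

/-- `σ` is a permutation of `Fin n` of cycle type with exactly two cycles,
with the cycle labelled `1` being the set `A` (of size `a`): `A` is
`σ`-invariant, `σ` acts with a single cycle on `A` and a single cycle on its
complement.  The pair `(σ, A)` is a permutation with labelled cycles. -/
def IsLabelledTwoCycle (n a : ℕ) (σ : Perm (Fin n)) (A : Finset (Fin n)) : Prop :=
  A.card = a ∧ (∀ x ∈ A, σ x ∈ A) ∧
    (∀ x ∈ A, ∀ y ∈ A, σ.SameCycle x y) ∧
    (∀ x ∈ Aᶜ, ∀ y ∈ Aᶜ, σ.SameCycle x y)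

/-- Tuples `(σ₁, τ₁, τ₂, σ₂)` in `S_{a+b}` contributing to
`H_0((a,b),(c,d))`: `σ₁` of cycle type `(a,b)` with labelled cycles (the
cycle labelled `1` is `A`, of length `a`), `σ₂` of cycle type `(c,d)` with
labelled cycles (the cycle labelled `1` is `C`, of length `c`),
`τ₁, τ₂` transpositions, `σ₂ τ₂ τ₁ σ₁ = id`, transitive. -/
def HurwitzTuplesTwoPart (a b c d : ℕ) :
    Set ((Perm (Fin (a + b)) × Finset (Fin (a + b))) × Perm (Fin (a + b)) ×
      Perm (Fin (a + b)) × (Perm (Fin (a + b)) × Finset (Fin (a + b)))) :=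
  {t | IsLabelledTwoCycle (a + b) a t.1.1 t.1.2 ∧
    IsLabelledTwoCycle (a + b) c t.2.2.2.1 t.2.2.2.2 ∧
    t.2.1.IsSwap ∧ t.2.2.1.IsSwap ∧
    t.2.2.2.1 * t.2.2.1 * t.2.1 * t.1.1 = 1 ∧
    ∀ x y : Fin (a + b),
      ∃ g ∈ Subgroup.closure {t.1.1, t.2.1, t.2.2.1, t.2.2.2.1}, g x = y}

/-! ### The labelled layer -/

lemma labelled_iff {n a : ℕ} {σ : Perm (Fin n)} {A : Finset (Fin n)} :
    IsLabelledTwoCycle n a σ A ↔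
      A.card = a ∧ σ.IsCycleOn A ∧ σ.IsCycleOn (Aᶜ : Finset (Fin n)) := by
  constructor
  · rintro ⟨h1, h2, h3, h4⟩
    have hbij : Set.BijOn σ A A := bijOn_of_mapsTo h2
    have h2' : ∀ x ∈ (Aᶜ : Finset (Fin n)), σ x ∈ (Aᶜ : Finset (Fin n)) := by
      intro x hx
      rw [Finset.mem_compl] at hx ⊢
      intro hσx
      obtain ⟨y, hy, hyx⟩ := hbij.surjOn hσx
      exact hx (by rwa [← σ.injective hyx])
    exact ⟨h1, ⟨hbij, fun x hx y hy => h3 x hx y hy⟩,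
      ⟨bijOn_of_mapsTo h2', fun x hx y hy => h4 x hx y hy⟩⟩
  · rintro ⟨h1, h2, h3⟩
    exact ⟨h1, fun x hx => h2.1.mapsTo hx, fun x hx y hy => h2.2 hx hy,
      fun x hx y hy => h3.2 hx hy⟩

lemma labelled_snd_unique {n c : ℕ} {σ : Perm (Fin n)} {C C' : Finset (Fin n)}
    (h : IsLabelledTwoCycle n c σ C) (h' : IsLabelledTwoCycle n c σ C')
    (hc : 0 < c) (h2c : 2 * c < n) : C = C' := by
  obtain ⟨hc1, hC, hCc⟩ := labelled_iff.mp h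
  obtain ⟨hc1', hC', hCc'⟩ := labelled_iff.mp h'
  obtain ⟨z, hz⟩ := Finset.card_pos.mp (hc1 ▸ hc)
  by_cases hz' : z ∈ C'
  · ext w
    constructor
    · intro hw
      exact isCycleOn_mem_of_sameCycle hC' hz' (hC.2 hz hw)
    · intro hw
      exact isCycleOn_mem_of_sameCycle hC hz (hC'.2 hz' hw)
  · exfalso
    have hz'' : z ∈ (C'ᶜ : Finset (Fin n)) := Finset.mem_compl.mpr hz'
    have hsub : (C'ᶜ : Finset (Fin n)) ⊆ C := by
      intro w hw
      exact isCycleOn_mem_of_sameCycle hC hz (hCc'.2 hz'' hw)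
    have hcard := Finset.card_le_card hsub
    rw [Finset.card_compl, hc1, hc1'] at hcard
    simp only [Fintype.card_fin] at hcard
    omega

/-! ### The standard block permutation and the factorial count -/

open scoped Classical

section Block

variable (a b : ℕ)

def bshiftFun : Fin (a + b) → Fin (a + b) := fun i =>
  if _ : i.val + 1 = a then ⟨0, by omega⟩
  else if _ : i.val + 1 = a + b then ⟨a, by have := i.isLt; omega⟩
  else ⟨i.val + 1, by have := i.isLt; omega⟩

lemma bshiftFun_injective : Function.Injective (bshiftFun a b) := by
  intro i j h
  unfold bshiftFun at h
  have hi := i.isLt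
  have hj := j.isLt
  apply Fin.ext
  split_ifs at h <;> (have hv := congrArg Fin.val h; simp only [] at hv; omega)

noncomputable def bshift : Perm (Fin (a + b)) :=
  Equiv.ofBijective _ (Finite.injective_iff_bijective.mp (bshiftFun_injective a b))

lemma bshift_apply (i : Fin (a + b)) : bshift a b i = bshiftFun a b i := rfl

lemma bshift_pow_lo (k : ℕ) (hk : k < a) (h0 : 0 < a + b) :
    ((bshift a b) ^ k) ⟨0, h0⟩ = ⟨k, by omega⟩ := by
  induction k with
  | zero => simp
  | succ m ih =>
      rw [pow_succ', Perm.mul_apply, ih (by omega), bshift_apply, bshiftFun]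
      have h1 : ¬ (m + 1 = a) := by omega
      have h2 : ¬ (m + 1 = a + b) := by omega
      simp only [h1, h2, dite_false]

lemma bshift_pow_hi (k : ℕ) (hk : k < b) (h0 : a < a + b) :
    ((bshift a b) ^ k) ⟨a, h0⟩ = ⟨a + k, by omega⟩ := by
  induction k with
  | zero => simp
  | succ m ih =>
      rw [pow_succ', Perm.mul_apply, ih (by omega), bshift_apply, bshiftFun]
      have h1 : ¬ (a + m + 1 = a) := by omega
      have h2 : ¬ (a + m + 1 = a + b) := by omega
      simp only [h1, h2, dite_false]
      exact Fin.ext (by simp; omega)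

def blockA : Finset (Fin (a + b)) := Finset.univ.filter (fun i => i.val < a)

lemma mem_blockA {i : Fin (a + b)} : i ∈ blockA a b ↔ i.val < a := by
  simp [blockA]

lemma mem_blockA_compl {i : Fin (a + b)} : i ∈ (blockA a b)ᶜ ↔ a ≤ i.val := by
  simp [blockA, Finset.mem_compl, Nat.not_lt]

lemma blockA_card (hb : 0 < b ∨ a ≤ a + b) : #(blockA a b) = a := by
  classical
  apply Finset.card_eq_of_bijective (fun i hi => (⟨i, by omega⟩ : Fin (a + b)))
  · intro x hx
    rw [mem_blockA] at hx
    exact ⟨x.val, hx, Fin.ext rfl⟩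
  · intro i hi
    rw [mem_blockA]
    exact hi
  · intro i j hi hj h
    have := congrArg Fin.val h
    simpa using this

lemma bshift_labelled (ha : 0 < a) (hb : 0 < b) :
    IsLabelledTwoCycle (a + b) a (bshift a b) (blockA a b) := by
  have h0 : (0 : ℕ) < a + b := by omega
  have haa : a < a + b := by omega
  refine ⟨blockA_card a b (Or.inl hb), ?_, ?_, ?_⟩
  · intro x hx
    rw [mem_blockA] at hx
    rw [mem_blockA, bshift_apply, bshiftFun]
    split_ifs with h1 h2 <;> simp <;> omega
  · intro x hx y hy
    rw [mem_blockA] at hx hy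
    have hx' : ((bshift a b) ^ x.val) ⟨0, h0⟩ = x := by
      rw [bshift_pow_lo a b x.val hx h0]
    have hy' : ((bshift a b) ^ y.val) ⟨0, h0⟩ = y := by
      rw [bshift_pow_lo a b y.val hy h0]
    exact (sc_iff_pow.mpr ⟨x.val, hx'⟩).symm.trans (sc_iff_pow.mpr ⟨y.val, hy'⟩)
  · intro x hx y hy
    rw [mem_blockA_compl] at hx hy
    have hx' : ((bshift a b) ^ (x.val - a)) ⟨a, haa⟩ = x := by
      rw [bshift_pow_hi a b (x.val - a) (by have := x.isLt; omega) haa]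
      exact Fin.ext (by simp; omega)
    have hy' : ((bshift a b) ^ (y.val - a)) ⟨a, haa⟩ = y := by
      rw [bshift_pow_hi a b (y.val - a) (by have := y.isLt; omega) haa]
      exact Fin.ext (by simp; omega)
    exact (sc_iff_pow.mpr ⟨x.val - a, hx'⟩).symm.trans (sc_iff_pow.mpr ⟨y.val - a, hy'⟩)

end Block

section Factorial

variable (a b : ℕ)

noncomputable def EFin : Finset ((Perm (Fin (a + b)) × Finset (Fin (a + b))) × Fin (a + b) × Fin (a + b)) :=
  Finset.univ.filter (fun e => IsLabelledTwoCycle (a + b) a e.1.1 e.1.2 ∧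
    e.2.1 ∈ e.1.2 ∧ e.2.2 ∈ e.1.2ᶜ)

noncomputable def LFin : Finset (Perm (Fin (a + b)) × Finset (Fin (a + b))) :=
  Finset.univ.filter (fun l => IsLabelledTwoCycle (a + b) a l.1 l.2)

lemma mem_EFin {a b : ℕ} {e : (Perm (Fin (a + b)) × Finset (Fin (a + b))) × Fin (a + b) × Fin (a + b)} :
    e ∈ EFin a b ↔ IsLabelledTwoCycle (a + b) a e.1.1 e.1.2 ∧
      e.2.1 ∈ e.1.2 ∧ e.2.2 ∈ e.1.2ᶜ := by
  simp [EFin]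

lemma mem_LFin {a b : ℕ} {l : Perm (Fin (a + b)) × Finset (Fin (a + b))} :
    l ∈ LFin a b ↔ IsLabelledTwoCycle (a + b) a l.1 l.2 := by
  simp [LFin]

def HFun (e : (Perm (Fin (a + b)) × Finset (Fin (a + b))) × Fin (a + b) × Fin (a + b)) :
    Fin (a + b) → Fin (a + b) := fun i =>
  if i.val < a then (e.1.1 ^ i.val) e.2.1 else (e.1.1 ^ (i.val - a)) e.2.2

variable {a b : ℕ}

lemma compl_card {A : Finset (Fin (a + b))} (h : #A = a) : #(Aᶜ : Finset (Fin (a + b))) = b := by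
  rw [Finset.card_compl, h, Fintype.card_fin]
  omega

lemma HFun_bijective {e : (Perm (Fin (a + b)) × Finset (Fin (a + b))) × Fin (a + b) × Fin (a + b)}
    (he : e ∈ EFin a b) : Function.Bijective (HFun a b e) := by
  obtain ⟨hlab, hp, hq⟩ := mem_EFin.mp he
  obtain ⟨hcard, hcA, hcAc⟩ := labelled_iff.mp hlab
  have hcardc : #((e.1.2)ᶜ : Finset (Fin (a + b))) = b := compl_card hcard
  rw [← Finite.injective_iff_bijective]
  intro i j h
  unfold HFun at h
  have hi := i.isLt
  have hj := j.isLt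
  split_ifs at h with h1 h2 h3
  · have := pow_window_inj hcA hp (by omega : i.val < #e.1.2) (by omega : j.val < #e.1.2) h
    exact Fin.ext this
  · exfalso
    have hL : (e.1.1 ^ i.val) e.2.1 ∈ e.1.2 := mapsTo_pow (fun w hw => hcA.1.mapsTo hw) _ _ hp
    have hR : (e.1.1 ^ (j.val - a)) e.2.2 ∈ (e.1.2)ᶜ :=
      mapsTo_pow (fun w hw => hcAc.1.mapsTo hw) _ _ hq
    rw [h] at hL
    exact (Finset.mem_compl.mp hR) hL
  · exfalso
    have hL : (e.1.1 ^ (i.val - a)) e.2.2 ∈ (e.1.2)ᶜ :=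
      mapsTo_pow (fun w hw => hcAc.1.mapsTo hw) _ _ hq
    have hR : (e.1.1 ^ j.val) e.2.1 ∈ e.1.2 := mapsTo_pow (fun w hw => hcA.1.mapsTo hw) _ _ hp
    rw [h] at hL
    exact (Finset.mem_compl.mp hL) hR
  · have := pow_window_inj hcAc hq (by omega : i.val - a < #(e.1.2ᶜ))
      (by omega : j.val - a < #(e.1.2ᶜ)) h
    exact Fin.ext (by omega)

lemma image_compl_perm (g : Perm (Fin (a + b))) (s : Finset (Fin (a + b))) :
    (Finset.image g s)ᶜ = Finset.image g (sᶜ) := by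
  ext z
  simp only [Finset.mem_compl, Finset.mem_image]
  constructor
  · intro h
    exact ⟨g⁻¹ z, fun hz => h ⟨g⁻¹ z, hz, by simp⟩, by simp⟩
  · rintro ⟨w, hw, rfl⟩ ⟨w', hw', hww⟩
    exact hw (g.injective hww ▸ hw')

lemma HFun_equivariant {e : (Perm (Fin (a + b)) × Finset (Fin (a + b))) × Fin (a + b) × Fin (a + b)}
    (he : e ∈ EFin a b) (ha : 0 < a) (hb : 0 < b) (i : Fin (a + b)) :
    HFun a b e (bshift a b i) = e.1.1 (HFun a b e i) := by
  obtain ⟨hlab, hp, hq⟩ := mem_EFin.mp he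
  obtain ⟨hcard, hcA, hcAc⟩ := labelled_iff.mp hlab
  have hcardc : #((e.1.2)ᶜ : Finset (Fin (a + b))) = b := compl_card hcard
  have him := i.isLt
  rcases Nat.lt_or_ge i.val a with h1 | h1
  · rcases Nat.lt_or_ge (i.val + 1) a with h2 | h2
    · have hb1 : bshift a b i = ⟨i.val + 1, by omega⟩ := by
        rw [bshift_apply, bshiftFun]
        have e1 : ¬ (i.val + 1 = a) := by omega
        have e2 : ¬ (i.val + 1 = a + b) := by omega
        simp only [e1, e2, dite_false]
      rw [hb1]
      simp only [HFun, h1, h2, if_true]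
      rw [← Perm.mul_apply, ← pow_succ']
    · have h2' : i.val + 1 = a := by omega
      have hb1 : bshift a b i = ⟨0, by omega⟩ := by
        rw [bshift_apply, bshiftFun]
        simp only [h2', dite_true]
      rw [hb1]
      simp only [HFun, h1, ha, if_true, pow_zero, Perm.coe_one, id_eq]
      rw [← Perm.mul_apply, ← pow_succ', h2']
      rw [show e.1.1 ^ a = e.1.1 ^ #e.1.2 by rw [hcard]]
      exact (hcA.pow_card_apply hp).symm
  · rcases Nat.lt_or_ge (i.val + 1) (a + b) with h2 | h2
    · have hb1 : bshift a b i = ⟨i.val + 1, by omega⟩ := by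
        rw [bshift_apply, bshiftFun]
        have e1 : ¬ (i.val + 1 = a) := by omega
        have e2 : ¬ (i.val + 1 = a + b) := by omega
        simp only [e1, e2, dite_false]
      rw [hb1]
      have e3 : ¬ (i.val < a) := by omega
      have e4 : ¬ (i.val + 1 < a) := by omega
      simp only [HFun, e3, e4, if_false]
      rw [show i.val + 1 - a = (i.val - a) + 1 by omega, ← Perm.mul_apply, ← pow_succ']
    · have h2' : i.val + 1 = a + b := by omega
      have hb1 : bshift a b i = ⟨a, by omega⟩ := by
        rw [bshift_apply, bshiftFun]
        have e1 : ¬ (i.val + 1 = a) := by omega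
        have e2 : ¬ (a + b = a) := by omega
        simp only [e1, h2', e2, dite_true, dite_false]
      rw [hb1]
      have e3 : ¬ (i.val < a) := by omega
      have e4 : ¬ (a < a) := by omega
      simp only [HFun, e3, e4, if_false, Nat.sub_self, pow_zero, Perm.coe_one, id_eq]
      rw [← Perm.mul_apply, ← pow_succ']
      rw [show i.val - a + 1 = b by omega]
      rw [show e.1.1 ^ b = e.1.1 ^ #(e.1.2ᶜ) by rw [hcardc]]
      exact (hcAc.pow_card_apply hq).symm

lemma HFun_of_perm (g : Perm (Fin (a + b))) (ha : 0 < a) (hb : 0 < b) (z : Fin (a + b)) :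
    HFun a b ((g * bshift a b * g⁻¹, Finset.image g (blockA a b)),
      g ⟨0, by omega⟩, g ⟨a, by omega⟩) z = g z := by
  have hzm := z.isLt
  rcases Nat.lt_or_ge z.val a with h1 | h1
  · simp only [HFun, h1, if_true]
    rw [conj_pow, Perm.mul_apply, Perm.mul_apply]
    simp only [Perm.inv_def, Equiv.symm_apply_apply]
    rw [bshift_pow_lo a b z.val h1 (by omega)]
  · simp only [HFun, h1, Nat.not_lt.mpr h1, if_false]
    rw [conj_pow, Perm.mul_apply, Perm.mul_apply]
    simp only [Perm.inv_def, Equiv.symm_apply_apply]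
    rw [bshift_pow_hi a b (z.val - a) (by omega) (by omega)]
    congr 1
    exact Fin.ext (show a + (z.val - a) = z.val by omega)

lemma EFin_card (ha : 0 < a) (hb : 0 < b) : #(EFin a b) = Nat.factorial (a + b) := by
  have h0 : (0 : ℕ) < a + b := by omega
  have haa : a < a + b := by omega
  have key : #(EFin a b) = #(Finset.univ : Finset (Perm (Fin (a + b)))) := by
    refine Finset.card_bij' (fun e he => Equiv.ofBijective _ (HFun_bijective he))
      (fun g _ => ((g * bshift a b * g⁻¹, Finset.image g (blockA a b)),
        g ⟨0, h0⟩, g ⟨a, haa⟩)) (fun _ _ => Finset.mem_univ _) ?_ ?_ ?_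
    · -- j maps into EFin
      intro g _
      show ((g * bshift a b * g⁻¹, Finset.image g (blockA a b)), g ⟨0, h0⟩, g ⟨a, haa⟩) ∈ EFin a b
      rw [mem_EFin]
      obtain ⟨hc0, hcA, hcAc⟩ := labelled_iff.mp (bshift_labelled a b ha hb)
      refine ⟨labelled_iff.mpr ⟨?_, ?_, ?_⟩, ?_, ?_⟩
      · rw [Finset.card_image_of_injective _ g.injective, hc0]
      · have hconj := hcA.conj (g := g)
        show (g * bshift a b * g⁻¹).IsCycleOn ↑(Finset.image (⇑g) (blockA a b))
        rwa [← Finset.coe_image] at hconj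
      · have hconj := hcAc.conj (g := g)
        show (g * bshift a b * g⁻¹).IsCycleOn ↑((Finset.image (⇑g) (blockA a b))ᶜ)
        rw [image_compl_perm]
        rwa [← Finset.coe_image] at hconj
      · exact Finset.mem_image.mpr ⟨⟨0, h0⟩, (mem_blockA a b).mpr ha, rfl⟩
      · rw [image_compl_perm]
        exact Finset.mem_image.mpr ⟨⟨a, haa⟩, (mem_blockA_compl a b).mpr le_rfl, rfl⟩
    · -- left inverse : recover e from H e
      intro e he
      obtain ⟨hlab, hp, hq⟩ := mem_EFin.mp he
      obtain ⟨hcard, hcA, hcAc⟩ := labelled_iff.mp hlab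
      set g := Equiv.ofBijective _ (HFun_bijective he) with hgdef
      have hgapp : ∀ i, g i = HFun a b e i := fun i => rfl
      have hg0 : g ⟨0, h0⟩ = e.2.1 := by
        rw [hgapp]; simp [HFun, ha]
      have hga : g ⟨a, haa⟩ = e.2.2 := by
        rw [hgapp]; simp [HFun]
      have himg : Finset.image g (blockA a b) = e.1.2 := by
        apply Finset.eq_of_subset_of_card_le
        · intro z hz
          obtain ⟨i, hi, rfl⟩ := Finset.mem_image.mp hz
          rw [mem_blockA] at hi
          rw [hgapp]
          simp only [HFun, hi, if_true]
          exact mapsTo_pow (fun w hw => hcA.1.mapsTo hw) _ _ hp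
        · rw [Finset.card_image_of_injective _ g.injective, blockA_card a b (Or.inl hb), hcard]
      have hperm : g * bshift a b * g⁻¹ = e.1.1 := by
        apply Equiv.ext
        intro z
        rw [Perm.mul_apply, Perm.mul_apply]
        have h1 : g (bshift a b (g⁻¹ z)) = e.1.1 (g (g⁻¹ z)) := by
          rw [hgapp, hgapp]
          exact HFun_equivariant he ha hb (g⁻¹ z)
        rw [h1, Perm.inv_def, Equiv.apply_symm_apply]
      show ((g * bshift a b * g⁻¹, Finset.image g (blockA a b)), g ⟨0, h0⟩, g ⟨a, haa⟩) = e
      rw [hperm, himg, hg0, hga]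
    · -- right inverse
      intro g _
      apply Equiv.ext
      intro z
      exact HFun_of_perm g ha hb z
  rw [key, Finset.card_univ, Fintype.card_perm, Fintype.card_fin]

lemma EFin_card_fiber (ha : 0 < a) (hb : 0 < b) :
    #(EFin a b) = #(LFin a b) * (a * b) := by
  rw [Finset.card_eq_sum_card_fiberwise
    (f := fun e => e.1) (t := LFin a b)
    (fun e he => mem_LFin.mpr (mem_EFin.mp he).1)]
  have hfib : ∀ l ∈ LFin a b,
      #((EFin a b).filter (fun e => e.1 = l)) = a * b := by
    intro l hl
    have hlab := mem_LFin.mp hl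
    obtain ⟨hcard, -, -⟩ := labelled_iff.mp hlab
    have hcardc : #((l.2)ᶜ : Finset (Fin (a + b))) = b := compl_card hcard
    have himg : (EFin a b).filter (fun e => e.1 = l) =
        Finset.image (fun pq => (l, pq)) (l.2 ×ˢ (l.2)ᶜ) := by
      ext e
      simp only [Finset.mem_filter, Finset.mem_image, Finset.mem_product, mem_EFin]
      constructor
      · rintro ⟨⟨h1, h2, h3⟩, rfl⟩
        exact ⟨e.2, ⟨h2, h3⟩, rfl⟩
      · rintro ⟨pq, ⟨h2, h3⟩, rfl⟩
        exact ⟨⟨hlab, h2, h3⟩, rfl⟩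
    rw [himg, Finset.card_image_of_injective _ (fun x y h => by
      simpa using (Prod.ext_iff.mp h).2), Finset.card_product, hcard, hcardc]
  rw [Finset.sum_congr rfl hfib, Finset.sum_const, smul_eq_mul]

lemma LFin_mul : 0 < a → 0 < b → #(LFin a b) * (a * b) = Nat.factorial (a + b) := by
  intro ha hb
  rw [← EFin_card_fiber ha hb, EFin_card ha hb]

end Factorial

/-! ### Helpers for the fiber count -/

section Helpers

variable {α : Type*} [Fintype α] [DecidableEq α]

lemma swap_eq_swap_cases {x y x' y' : α} (hxy : x ≠ y) (h : swap x y = swap x' y') :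
    (x = x' ∧ y = y') ∨ (x = y' ∧ y = x') := by
  have hx : y = swap x' y' x := by rw [← h, swap_apply_left]
  rcases eq_or_ne x x' with rfl | h1
  · left
    refine ⟨rfl, ?_⟩
    rw [hx, swap_apply_left]
  · rcases eq_or_ne x y' with rfl | h2
    · right
      refine ⟨rfl, ?_⟩
      rw [hx, swap_apply_right]
    · exfalso
      rw [swap_apply_of_ne_of_ne h1 h2] at hx
      exact hxy hx.symm

lemma class_eq {σ : Perm α} {T T' : Finset α} (hT : σ.IsCycleOn T) (hT' : σ.IsCycleOn T')
    {z : α} (hz : z ∈ T) (hz' : z ∈ T') : T = T' := by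
  ext w
  constructor
  · intro hw
    exact isCycleOn_mem_of_sameCycle hT' hz' (hT.2 hz hw)
  · intro hw
    exact isCycleOn_mem_of_sameCycle hT hz (hT'.2 hz' hw)

lemma compl_of_partition {P Q : Finset α} (h : P ∪ Q = Finset.univ) (hd : Disjoint P Q) :
    Pᶜ = Q := by
  ext z
  rw [Finset.mem_compl]
  constructor
  · intro hz
    have : z ∈ P ∪ Q := h ▸ Finset.mem_univ z
    rcases Finset.mem_union.mp this with h' | h'
    · exact absurd h' hz
    · exact h'
  · intro hz hzP
    exact Finset.disjoint_left.mp hd hzP hz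

lemma isSwap_inv_eq {τ : Perm α} (h : τ.IsSwap) : τ⁻¹ = τ := by
  obtain ⟨x, y, hxy, rfl⟩ := h
  exact swap_inv x y

end Helpers

/-! ### The pair set over a fixed labelled first factor -/

noncomputable def pairSet (n c : ℕ) (σ₁ : Perm (Fin n)) : Finset (Perm (Fin n) × Perm (Fin n)) :=
  Finset.univ.filter (fun p => p.1.IsSwap ∧ p.2.IsSwap ∧
    (∃ C, IsLabelledTwoCycle n c ((p.2 * p.1 * σ₁)⁻¹) C) ∧
    ∀ z w : Fin n, ∃ g ∈ Subgroup.closure {σ₁, p.1, p.2, (p.2 * p.1 * σ₁)⁻¹}, g z = w)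

lemma mem_pairSet {n c : ℕ} {σ₁ : Perm (Fin n)} {p : Perm (Fin n) × Perm (Fin n)} :
    p ∈ pairSet n c σ₁ ↔ p.1.IsSwap ∧ p.2.IsSwap ∧
      (∃ C, IsLabelledTwoCycle n c ((p.2 * p.1 * σ₁)⁻¹) C) ∧
      ∀ z w : Fin n, ∃ g ∈ Subgroup.closure {σ₁, p.1, p.2, (p.2 * p.1 * σ₁)⁻¹}, g z = w := by
  simp [pairSet]

lemma sigma2_form {n : ℕ} {σ₁ τ₁ τ₂ : Perm (Fin n)} (h1 : τ₁.IsSwap) (h2 : τ₂.IsSwap) :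
    (τ₂ * τ₁ * σ₁)⁻¹ = σ₁⁻¹ * τ₁ * τ₂ := by
  rw [mul_inv_rev, mul_inv_rev, isSwap_inv_eq h1, isSwap_inv_eq h2, mul_assoc]

lemma trans_of_cover {n : ℕ} {S : Set (Perm (Fin n))} {π₁ π₂ : Perm (Fin n)}
    (h1 : π₁ ∈ Subgroup.closure S) (h2 : π₂ ∈ Subgroup.closure S) {u₀ : Fin n}
    (hcov : ∀ z, π₁.SameCycle z u₀ ∨ π₂.SameCycle z u₀) :
    ∀ z w : Fin n, ∃ g ∈ Subgroup.closure S, g z = w := by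
  have get : ∀ v, ∃ g ∈ Subgroup.closure S, g v = u₀ := by
    intro v
    rcases hcov v with ⟨i, hi⟩ | ⟨i, hi⟩
    · exact ⟨π₁ ^ i, Subgroup.zpow_mem _ h1 i, hi⟩
    · exact ⟨π₂ ^ i, Subgroup.zpow_mem _ h2 i, hi⟩
  intro z w
  obtain ⟨g1, hg1, e1⟩ := get z
  obtain ⟨g2, hg2, e2⟩ := get w
  refine ⟨g2⁻¹ * g1, mul_mem (inv_mem hg2) hg1, ?_⟩
  rw [Perm.mul_apply, e1, ← e2, Perm.inv_def, Equiv.symm_apply_apply]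

section Count

variable {a b c d : ℕ} {σ₁ : Perm (Fin (a + b))} {A : Finset (Fin (a + b))}

lemma card_univ_fin : #(Finset.univ : Finset (Fin (a + b))) = a + b := by
  rw [Finset.card_univ, Fintype.card_fin]

lemma rho_cycleOn_univ (hlab : IsLabelledTwoCycle (a + b) a σ₁ A) {x y : Fin (a + b)}
    (hx : x ∈ A) (hy : y ∈ Aᶜ) :
    (σ₁⁻¹ * swap x y).IsCycleOn (Finset.univ : Finset (Fin (a + b))) := by
  obtain ⟨hcard, hcA, hcAc⟩ := labelled_iff.mp hlab
  have hsA : σ₁⁻¹.IsCycleOn (A : Set (Fin (a + b))) := isCycleOn_inv.mpr hcA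
  have hsAc : σ₁⁻¹.IsCycleOn ((Aᶜ : Finset (Fin (a + b))) : Set (Fin (a + b))) :=
    isCycleOn_inv.mpr hcAc
  have := merge_isCycleOn hsA hsAc disjoint_compl_right hx hy
  rwa [Finset.union_compl] at this

lemma case1_mem (ha : 0 < a) (hb : 0 < b) (hc : 0 < c) (hca : c < a)
    (hlab : IsLabelledTwoCycle (a + b) a σ₁ A) {x y : Fin (a + b)}
    (hx : x ∈ A) (hy : y ∈ Aᶜ) (u : Fin (a + b)) :
    (swap x y, swap u (((σ₁⁻¹ * swap x y) ^ c) u)) ∈ pairSet (a + b) c σ₁ := by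
  set ρ := σ₁⁻¹ * swap x y with hρ
  have hxy : x ≠ y := fun h => (Finset.mem_compl.mp hy) (h ▸ hx)
  have hρu : ρ.IsCycleOn (Finset.univ : Finset (Fin (a + b))) := rho_cycleOn_univ hlab hx hy
  have hcn : c < #(Finset.univ : Finset (Fin (a + b))) := by rw [card_univ_fin]; omega
  have hvu : (ρ ^ c) u ≠ u := pow_ne_self hρu (Finset.mem_univ u) hc hcn
  have hτ₁ : (swap x y).IsSwap := ⟨x, y, hxy, rfl⟩
  have hτ₂ : (swap u ((ρ ^ c) u)).IsSwap := ⟨u, (ρ ^ c) u, fun h => hvu h.symm, rfl⟩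
  have hform : (swap u ((ρ ^ c) u) * swap x y * σ₁)⁻¹ = ρ * swap u ((ρ ^ c) u) := by
    rw [sigma2_form hτ₁ hτ₂, hρ, mul_assoc]
  rw [mem_pairSet]
  refine ⟨hτ₁, hτ₂, ⟨part1 ρ u c, ?_⟩, ?_⟩
  · rw [hform]
    refine labelled_iff.mpr ⟨?_, ?_, ?_⟩
    · exact part1_card hρu (Finset.mem_univ u) hcn
    · exact split_isCycleOn_part1 hρu (Finset.mem_univ u) hc hcn
    · have hcompl : (part1 ρ u c)ᶜ = part2 ρ u c #(Finset.univ : Finset (Fin (a + b))) :=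
        compl_of_partition (part_union hρu (Finset.mem_univ u) hcn)
          (part_disjoint hρu (Finset.mem_univ u) hc hcn)
      rw [hcompl]
      exact split_isCycleOn_part2 hρu (Finset.mem_univ u) hc hcn
  · rw [hform]
    have hσ₁ : σ₁ ∈ Subgroup.closure
        {σ₁, swap x y, swap u ((ρ ^ c) u), ρ * swap u ((ρ ^ c) u)} :=
      Subgroup.subset_closure (by simp)
    have hτ : swap x y ∈ Subgroup.closure
        {σ₁, swap x y, swap u ((ρ ^ c) u), ρ * swap u ((ρ ^ c) u)} :=
      Subgroup.subset_closure (by simp)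
    have hρmem : ρ ∈ Subgroup.closure
        {σ₁, swap x y, swap u ((ρ ^ c) u), ρ * swap u ((ρ ^ c) u)} :=
      mul_mem (inv_mem hσ₁) hτ
    exact trans_of_cover hρmem hρmem (u₀ := u)
      (fun z => Or.inl (hρu.2 (by simp) (by simp)))

lemma case2_mem (hc : 0 < c)
    (hlab : IsLabelledTwoCycle (a + b) a σ₁ A) {B : Finset (Fin (a + b))}
    (hB : σ₁⁻¹.IsCycleOn B) (hBc : σ₁⁻¹.IsCycleOn (Bᶜ : Finset (Fin (a + b))))
    (hcB : c < #B) {u w : Fin (a + b)} (hu : u ∈ B) (hw : w ∈ (Bᶜ : Finset (Fin (a + b))))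
    {k : ℕ} (hk : k < #B - c) :
    (swap u ((σ₁⁻¹ ^ c) u),
      swap (((σ₁⁻¹ * swap u ((σ₁⁻¹ ^ c) u)) ^ k) u) w) ∈ pairSet (a + b) c σ₁ := by
  set s := σ₁⁻¹ with hs
  set v := (s ^ c) u with hv
  set τ₁ := swap u v with hτ₁def
  set ρ := s * τ₁ with hρ
  set vk := ((ρ : Perm (Fin (a + b))) ^ k) u with hvk
  have hvu : v ≠ u := pow_ne_self hB hu hc hcB
  have hτ₁ : τ₁.IsSwap := ⟨u, v, fun h => hvu h.symm, rfl⟩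
  have hP1 : ρ.IsCycleOn (part1 s u c) := split_isCycleOn_part1 hB hu hc hcB
  have hP2 : ρ.IsCycleOn (part2 s u c #B) := split_isCycleOn_part2 hB hu hc hcB
  have hP1sub : part1 s u c ⊆ B := (part_subset hB hu).1
  have hP2sub : part2 s u c #B ⊆ B := (part_subset hB hu).2
  have hPun : part1 s u c ∪ part2 s u c #B = B := part_union hB hu hcB
  have hPdis : Disjoint (part1 s u c) (part2 s u c #B) := part_disjoint hB hu hc hcB
  have huP2 : u ∈ part2 s u c #B := mem_part2_self hB hu hcB
  have hvP1 : v ∈ part1 s u c := mem_part1_self hc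
  have hρBc : ρ.IsCycleOn (Bᶜ : Finset (Fin (a + b))) := by
    refine agree_isCycleOn ?_ (fun z hz => hBc.1.mapsTo hz) hBc
    intro z hz
    have hz1 : z ≠ u := fun h => (Finset.mem_compl.mp hz) (h ▸ hu)
    have hz2 : z ≠ v := fun h =>
      (Finset.mem_compl.mp hz) (h ▸ mapsTo_pow (fun q hq => hB.1.mapsTo hq) c u hu)
    exact split_offcycle hc z hz1 hz2
  have hvkP2 : vk ∈ part2 s u c #B := mapsTo_pow (fun q hq => hP2.1.mapsTo hq) k u huP2
  have hvkB : vk ∈ B := hP2sub hvkP2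
  have hvkw : vk ≠ w := fun h => (Finset.mem_compl.mp hw) (h ▸ hvkB)
  have hτ₂ : (swap vk w).IsSwap := ⟨vk, w, hvkw, rfl⟩
  have hdis2 : Disjoint (part2 s u c #B) (Bᶜ : Finset (Fin (a + b))) :=
    disjoint_compl_right.mono_left hP2sub
  have hσ₂cyc : (ρ * swap vk w).IsCycleOn ((part2 s u c #B ∪ Bᶜ : Finset (Fin (a + b)))) :=
    merge_isCycleOn hP2 hρBc hdis2 hvkP2 hw
  have hσ₂P1 : (ρ * swap vk w).IsCycleOn (part1 s u c) := by
    refine agree_isCycleOn ?_ (fun z hz => hP1.1.mapsTo hz) hP1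
    intro z hz
    have hz1 : z ≠ vk := fun h => Finset.disjoint_left.mp hPdis hz (h ▸ hvkP2)
    have hz2 : z ≠ w := fun h => (Finset.mem_compl.mp hw) (h ▸ hP1sub hz)
    simp [Perm.mul_apply, swap_apply_of_ne_of_ne hz1 hz2]
  have hcompl : (part1 s u c)ᶜ = part2 s u c #B ∪ (Bᶜ : Finset (Fin (a + b))) := by
    apply compl_of_partition
    · rw [← Finset.union_assoc, hPun, Finset.union_compl]
    · exact Finset.disjoint_union_right.mpr
        ⟨hPdis, disjoint_compl_right.mono_left hP1sub⟩
  have hform : (swap vk w * τ₁ * σ₁)⁻¹ = ρ * swap vk w := by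
    rw [sigma2_form hτ₁ hτ₂, ← hs, hρ, mul_assoc]
  rw [mem_pairSet]
  refine ⟨hτ₁, hτ₂, ⟨part1 s u c, ?_⟩, ?_⟩
  · rw [hform]
    refine labelled_iff.mpr ⟨part1_card hB hu hcB, hσ₂P1, ?_⟩
    rw [hcompl]
    exact hσ₂cyc
  · rw [hform]
    have hσ₁ : σ₁ ∈ Subgroup.closure {σ₁, τ₁, swap vk w, ρ * swap vk w} :=
      Subgroup.subset_closure (by simp)
    have hσ₂ : ρ * swap vk w ∈ Subgroup.closure {σ₁, τ₁, swap vk w, ρ * swap vk w} :=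
      Subgroup.subset_closure (by simp)
    refine trans_of_cover (inv_mem hσ₁) hσ₂ (u₀ := u) ?_
    intro z
    by_cases hz : z ∈ B
    · exact Or.inl (hB.2 hz hu)
    · refine Or.inr (hσ₂cyc.2 ?_ ?_)
      · simp only [Finset.coe_union, Set.mem_union, Finset.mem_coe]
        exact Or.inr (Finset.mem_compl.mpr hz)
      · simp only [Finset.coe_union, Set.mem_union, Finset.mem_coe]
        exact Or.inl huP2

lemma two_class_contra {n : ℕ} {σ : Perm (Fin n)} {T T' D : Finset (Fin n)}
    (hT : σ.IsCycleOn T) (hT' : σ.IsCycleOn T') (hd : Disjoint T T') {z z' : Fin n}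
    (hz : z ∈ T) (hz' : z' ∈ T') (hD : σ.IsCycleOn D) (hzD : z ∈ D) (hz'D : z' ∈ D) :
    False := by
  have e1 : T = D := class_eq hT hD hz hzD
  have e2 : T' = D := class_eq hT' hD hz' hz'D
  have : z' ∈ T := by rw [e1, ← e2]; exact hz'
  exact Finset.disjoint_left.mp hd this hz'

lemma same_class_contra (hc : 0 < c) {ρ : Perm (Fin (a + b))} {K K' : Finset (Fin (a + b))}
    (hK : ρ.IsCycleOn K) (hK' : ρ.IsCycleOn K') (hdis : Disjoint K K') {u' v' : Fin (a + b)}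
    (hu' : u' ∈ K) (hv' : v' ∈ K) (hne : u' ≠ v') {z3 : Fin (a + b)} (hz3 : z3 ∈ K')
    {C : Finset (Fin (a + b))} (hC : IsLabelledTwoCycle (a + b) c (ρ * swap u' v') C) :
    False := by
  obtain ⟨t', ht', hpow⟩ := (hK.exists_pow_eq hu' hv')
  have ht0 : 0 < t' := by
    rcases Nat.eq_zero_or_pos t' with h0 | h0
    · exfalso; apply hne; rw [← hpow, h0, pow_zero]; rfl
    · exact h0
  have hv'eq : v' = (ρ ^ t') u' := hpow.symm
  subst hv'eq
  have hK1 : (ρ * swap u' ((ρ ^ t') u')).IsCycleOn (part1 ρ u' t') :=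
    split_isCycleOn_part1 hK hu' ht0 ht'
  have hK2 : (ρ * swap u' ((ρ ^ t') u')).IsCycleOn (part2 ρ u' t' #K) :=
    split_isCycleOn_part2 hK hu' ht0 ht'
  have hK'2 : (ρ * swap u' ((ρ ^ t') u')).IsCycleOn K' := by
    refine agree_isCycleOn ?_ (fun z hz => hK'.1.mapsTo hz) hK'
    intro z hz
    have hz1 : z ≠ u' := fun h => Finset.disjoint_right.mp hdis hz (h ▸ hu')
    have hz2 : z ≠ (ρ ^ t') u' := fun h => Finset.disjoint_right.mp hdis hz (h ▸ hv')
    exact split_offcycle ht0 z hz1 hz2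
  have hd12 : Disjoint (part1 ρ u' t') (part2 ρ u' t' #K) := part_disjoint hK hu' ht0 ht'
  have hd1' : Disjoint (part1 ρ u' t') K' := hdis.mono_left (part_subset hK hu').1
  have hd2' : Disjoint (part2 ρ u' t' #K) K' := hdis.mono_left (part_subset hK hu').2
  have hm1 : (ρ ^ t') u' ∈ part1 ρ u' t' := mem_part1_self ht0
  have hm2 : u' ∈ part2 ρ u' t' #K := mem_part2_self hK hu' ht'
  obtain ⟨-, hCc, hCcc⟩ := labelled_iff.mp hC
  set σ₂ := ρ * swap u' ((ρ ^ t') u')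
  have hmem : ∀ z : Fin (a + b), z ∈ C ∨ z ∈ (Cᶜ : Finset (Fin (a + b))) := by
    intro z
    by_cases h : z ∈ C
    · exact Or.inl h
    · exact Or.inr (Finset.mem_compl.mpr h)
  rcases hmem ((ρ ^ t') u') with h1 | h1 <;> rcases hmem u' with h2 | h2 <;>
    rcases hmem z3 with h3 | h3
  · exact two_class_contra hK1 hK2 hd12 hm1 hm2 hCc h1 h2
  · exact two_class_contra hK1 hK2 hd12 hm1 hm2 hCc h1 h2
  · exact two_class_contra hK1 hK'2 hd1' hm1 hz3 hCc h1 h3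
  · exact two_class_contra hK2 hK'2 hd2' hm2 hz3 hCcc h2 h3
  · exact two_class_contra hK2 hK'2 hd2' hm2 hz3 hCc h2 h3
  · exact two_class_contra hK1 hK'2 hd1' hm1 hz3 hCcc h1 h3
  · exact two_class_contra hK1 hK2 hd12 hm1 hm2 hCcc h1 h2
  · exact two_class_contra hK1 hK2 hd12 hm1 hm2 hCcc h1 h2

lemma case1_classify (hc : 0 < c) (hcd : 2 * c < a + b)
    (hlab : IsLabelledTwoCycle (a + b) a σ₁ A) {x y : Fin (a + b)}
    (hx : x ∈ A) (hy : y ∈ Aᶜ) {τ₂ : Perm (Fin (a + b))} (hτ₂ : τ₂.IsSwap)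
    {C : Finset (Fin (a + b))}
    (hC : IsLabelledTwoCycle (a + b) c ((τ₂ * swap x y * σ₁)⁻¹) C) :
    ∃ u, τ₂ = swap u (((σ₁⁻¹ * swap x y) ^ c) u) := by
  set ρ := σ₁⁻¹ * swap x y with hρ
  have hxy : x ≠ y := fun h => (Finset.mem_compl.mp hy) (h ▸ hx)
  have hτ₁ : (swap x y).IsSwap := ⟨x, y, hxy, rfl⟩
  have hρu : ρ.IsCycleOn (Finset.univ : Finset (Fin (a + b))) := rho_cycleOn_univ hlab hx hy
  obtain ⟨u', v', hne, rfl⟩ := hτ₂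
  have hform : (swap u' v' * swap x y * σ₁)⁻¹ = ρ * swap u' v' :=
    (sigma2_form hτ₁ ⟨u', v', hne, rfl⟩).trans (by rw [hρ, mul_assoc])
  rw [hform] at hC
  obtain ⟨t, ht, hpow⟩ := hρu.exists_pow_eq (Finset.mem_univ u') (Finset.mem_univ v')
  rw [card_univ_fin] at ht
  have ht0 : 0 < t := by
    rcases Nat.eq_zero_or_pos t with h0 | h0
    · exfalso; apply hne; rw [← hpow, h0, pow_zero]; rfl
    · exact h0
  have hveq : v' = (ρ ^ t) u' := hpow.symm
  have htn : t < #(Finset.univ : Finset (Fin (a + b))) := by rw [card_univ_fin]; omega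
  have hQ1 : (ρ * swap u' v').IsCycleOn (part1 ρ u' t) := by
    rw [hveq]; exact split_isCycleOn_part1 hρu (Finset.mem_univ u') ht0 htn
  have hQ2 : (ρ * swap u' v').IsCycleOn
      (part2 ρ u' t #(Finset.univ : Finset (Fin (a + b)))) := by
    rw [hveq]; exact split_isCycleOn_part2 hρu (Finset.mem_univ u') ht0 htn
  have hQc1 : #(part1 ρ u' t) = t := part1_card hρu (Finset.mem_univ u') htn
  have hQc2 : #(part2 ρ u' t #(Finset.univ : Finset (Fin (a + b)))) =
      #(Finset.univ : Finset (Fin (a + b))) - t := part2_card hρu (Finset.mem_univ u')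
  have hQun := part_union hρu (Finset.mem_univ u') htn
  obtain ⟨hCcard, hCc, hCcc⟩ := labelled_iff.mp hC
  obtain ⟨z₀, hz₀⟩ := Finset.card_pos.mp (hCcard ▸ hc)
  have hz₀' : z₀ ∈ part1 ρ u' t ∪ part2 ρ u' t #(Finset.univ : Finset (Fin (a + b))) := by
    rw [hQun]; exact Finset.mem_univ z₀
  rcases Finset.mem_union.mp hz₀' with hz1 | hz2
  · -- C = Q1, t = c
    have hCeq : C = part1 ρ u' t := class_eq hCc hQ1 hz₀ hz1
    have htc : t = c := by rw [hCeq] at hCcard; omega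
    exact ⟨u', by rw [hveq, htc]⟩
  · -- C = Q2, t = (a+b) - c, use v' as base point
    have hCeq : C = part2 ρ u' t #(Finset.univ : Finset (Fin (a + b))) :=
      class_eq hCc hQ2 hz₀ hz2
    have htc : t = (a + b) - c := by
      rw [hCeq] at hCcard
      rw [hQc2, card_univ_fin] at hCcard
      omega
    refine ⟨v', ?_⟩
    have hcv : (ρ ^ c) v' = u' := by
      rw [hveq, ← Perm.mul_apply, ← pow_add]
      have : c + t = a + b := by omega
      rw [this]
      have hfin := hρu.pow_card_apply (Finset.mem_univ u')
      rwa [card_univ_fin] at hfin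
    rw [hcv]
    exact swap_comm u' v'

lemma case2_main (hc : 0 < c) {B : Finset (Fin (a + b))}
    (hB : σ₁⁻¹.IsCycleOn B) (hcB : c < #B) (hcBc : c < #(Bᶜ : Finset (Fin (a + b))))
    (hBc : σ₁⁻¹.IsCycleOn (Bᶜ : Finset (Fin (a + b))))
    {x y : Fin (a + b)} (hx : x ∈ B) (hy : y ∈ B) (hxy : x ≠ y)
    {p q : Fin (a + b)} (hp : p ∈ B) (hq : q ∈ (Bᶜ : Finset (Fin (a + b))))
    {C : Finset (Fin (a + b))}
    (hC : IsLabelledTwoCycle (a + b) c (σ₁⁻¹ * swap x y * swap p q) C) :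
    ∃ u ∈ B, ∃ k < #B - c, ∃ w ∈ (Bᶜ : Finset (Fin (a + b))),
      swap x y = swap u ((σ₁⁻¹ ^ c) u) ∧
      swap p q = swap (((σ₁⁻¹ * swap u ((σ₁⁻¹ ^ c) u)) ^ k) u) w := by
  set s := σ₁⁻¹ with hs
  set ρ := s * swap x y with hρ
  obtain ⟨t, htB, hyt⟩ := hB.exists_pow_eq hx hy
  have ht0 : 0 < t := by
    rcases Nat.eq_zero_or_pos t with h0 | h0
    · exfalso; apply hxy; rw [← hyt, h0, pow_zero]; rfl
    · exact h0
  have hP1 : ρ.IsCycleOn (part1 s x t) := by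
    have := split_isCycleOn_part1 hB hx ht0 htB
    rwa [hyt] at this
  have hP2 : ρ.IsCycleOn (part2 s x t #B) := by
    have := split_isCycleOn_part2 hB hx ht0 htB
    rwa [hyt] at this
  have hP1sub : part1 s x t ⊆ B := (part_subset hB hx).1
  have hP2sub : part2 s x t #B ⊆ B := (part_subset hB hx).2
  have hPun : part1 s x t ∪ part2 s x t #B = B := part_union hB hx htB
  have hPdis : Disjoint (part1 s x t) (part2 s x t #B) := part_disjoint hB hx ht0 htB
  have hxP2 : x ∈ part2 s x t #B := mem_part2_self hB hx htB
  have hyP1 : y ∈ part1 s x t := hyt ▸ mem_part1_self ht0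
  have hρBc : ρ.IsCycleOn (Bᶜ : Finset (Fin (a + b))) := by
    refine agree_isCycleOn ?_ (fun z hz => hBc.1.mapsTo hz) hBc
    intro z hz
    have hz1 : z ≠ x := fun h => (Finset.mem_compl.mp hz) (h ▸ hx)
    have hz2 : z ≠ y := fun h => (Finset.mem_compl.mp hz) (h ▸ hy)
    simp [hρ, Perm.mul_apply, swap_apply_of_ne_of_ne hz1 hz2]
  have hdis2 : Disjoint (part2 s x t #B) (Bᶜ : Finset (Fin (a + b))) :=
    disjoint_compl_right.mono_left hP2sub
  have hdis1 : Disjoint (part1 s x t) (Bᶜ : Finset (Fin (a + b))) :=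
    disjoint_compl_right.mono_left hP1sub
  rw [show σ₁⁻¹ * swap x y * swap p q = ρ * swap p q from rfl] at hC
  obtain ⟨hCcard, hCc, hCcc⟩ := labelled_iff.mp hC
  obtain ⟨z₀, hz₀⟩ := Finset.card_pos.mp (hCcard ▸ hc)
  have hpP : p ∈ part1 s x t ∪ part2 s x t #B := by rw [hPun]; exact hp
  rcases Finset.mem_union.mp hpP with hp1 | hp2
  · -- p in the class of y : merged P1 ∪ Bᶜ, lone class P2, C = P2, t = #B - c
    have hM : (ρ * swap p q).IsCycleOn ((part1 s x t ∪ Bᶜ : Finset (Fin (a + b)))) :=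
      merge_isCycleOn hP1 hρBc hdis1 hp1 hq
    have hσP2 : (ρ * swap p q).IsCycleOn (part2 s x t #B) := by
      refine agree_isCycleOn ?_ (fun z hz => hP2.1.mapsTo hz) hP2
      intro z hz
      have hz1 : z ≠ p := fun h => Finset.disjoint_left.mp hPdis hp1 (h ▸ hz)
      have hz2 : z ≠ q := fun h => (Finset.mem_compl.mp hq) (h ▸ hP2sub hz)
      simp [Perm.mul_apply, swap_apply_of_ne_of_ne hz1 hz2]
    have hz₀' : z₀ ∈ part2 s x t #B ∪ (part1 s x t ∪ Bᶜ) := by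
      rw [← Finset.union_assoc, Finset.union_comm (part2 s x t #B) (part1 s x t), hPun,
        Finset.union_compl]
      exact Finset.mem_univ z₀
    rcases Finset.mem_union.mp hz₀' with hz2' | hzM
    · -- C = P2
      have hCeq : C = part2 s x t #B := class_eq hCc hσP2 hz₀ hz2'
      have htc : t = #B - c := by
        rw [hCeq, part2_card hB hx] at hCcard
        omega
      -- u := y
      have hcy : (s ^ c) y = x := by
        rw [← hyt, ← Perm.mul_apply, ← pow_add]
        have hct : c + t = #B := by omega
        rw [hct]
        exact hB.pow_card_apply hx
      have hswap : swap x y = swap y ((s ^ c) y) := by rw [hcy, swap_comm]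
      have hρy : s * swap y ((s ^ c) y) = ρ := by rw [← hswap, hρ]
      obtain ⟨k, hk, hkeq⟩ := hP1.exists_pow_eq hyP1 hp1
      rw [part1_card hB hx htB] at hk
      refine ⟨y, hy, k, by omega, q, hq, hswap, ?_⟩
      rw [hρy, hkeq]
    · -- C = P1 ∪ Bᶜ : cardinality contradiction
      exfalso
      have hCeq : C = part1 s x t ∪ Bᶜ := class_eq hCc hM hz₀ hzM
      have : #C = #(part1 s x t) + #(Bᶜ : Finset (Fin (a + b))) := by
        rw [hCeq, Finset.card_union_of_disjoint hdis1]
      omega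
  · -- p in the class of x : merged P2 ∪ Bᶜ, lone class P1, C = P1, t = c
    have hM : (ρ * swap p q).IsCycleOn ((part2 s x t #B ∪ Bᶜ : Finset (Fin (a + b)))) :=
      merge_isCycleOn hP2 hρBc hdis2 hp2 hq
    have hσP1 : (ρ * swap p q).IsCycleOn (part1 s x t) := by
      refine agree_isCycleOn ?_ (fun z hz => hP1.1.mapsTo hz) hP1
      intro z hz
      have hz1 : z ≠ p := fun h => Finset.disjoint_left.mp hPdis hz (h ▸ hp2)
      have hz2 : z ≠ q := fun h => (Finset.mem_compl.mp hq) (h ▸ hP1sub hz)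
      simp [Perm.mul_apply, swap_apply_of_ne_of_ne hz1 hz2]
    have hz₀' : z₀ ∈ part1 s x t ∪ (part2 s x t #B ∪ Bᶜ) := by
      rw [← Finset.union_assoc, hPun, Finset.union_compl]
      exact Finset.mem_univ z₀
    rcases Finset.mem_union.mp hz₀' with hz1' | hzM
    · -- C = P1, t = c
      have hCeq : C = part1 s x t := class_eq hCc hσP1 hz₀ hz1'
      have htc : t = c := by
        rw [hCeq, part1_card hB hx htB] at hCcard
        omega
      obtain ⟨k, hk, hkeq⟩ := hP2.exists_pow_eq hxP2 hp2
      rw [part2_card hB hx] at hk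
      refine ⟨x, hx, k, by omega, q, hq, ?_, ?_⟩
      · rw [← htc, hyt]
      · rw [← htc, hyt, ← hρ, hkeq]
    · exfalso
      have hCeq : C = part2 s x t #B ∪ Bᶜ := class_eq hCc hM hz₀ hzM
      have : #C = #(part2 s x t #B) + #(Bᶜ : Finset (Fin (a + b))) := by
        rw [hCeq, Finset.card_union_of_disjoint hdis2]
      omega

lemma case2_classify (hc : 0 < c) {B : Finset (Fin (a + b))}
    (hB : σ₁⁻¹.IsCycleOn B) (hBc : σ₁⁻¹.IsCycleOn (Bᶜ : Finset (Fin (a + b))))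
    (hcB : c < #B) (hcBc : c < #(Bᶜ : Finset (Fin (a + b))))
    {x y : Fin (a + b)} (hx : x ∈ B) (hy : y ∈ B) (hxy : x ≠ y)
    {τ₂ : Perm (Fin (a + b))} (hτ₂ : τ₂.IsSwap) {C : Finset (Fin (a + b))}
    (hC : IsLabelledTwoCycle (a + b) c ((τ₂ * swap x y * σ₁)⁻¹) C) :
    ∃ u ∈ B, ∃ k < #B - c, ∃ w ∈ (Bᶜ : Finset (Fin (a + b))),
      swap x y = swap u ((σ₁⁻¹ ^ c) u) ∧
      τ₂ = swap (((σ₁⁻¹ * swap u ((σ₁⁻¹ ^ c) u)) ^ k) u) w := by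
  set s := σ₁⁻¹ with hs
  set ρ := s * swap x y with hρ
  have hτ₁ : (swap x y).IsSwap := ⟨x, y, hxy, rfl⟩
  obtain ⟨u', v', hne, rfl⟩ := hτ₂
  rw [sigma2_form hτ₁ ⟨u', v', hne, rfl⟩] at hC
  by_cases hu'B : u' ∈ B
  · by_cases hv'B : v' ∈ B
    · -- both in B : contradiction
      exfalso
      obtain ⟨t, htB, hyt⟩ := hB.exists_pow_eq hx hy
      have ht0 : 0 < t := by
        rcases Nat.eq_zero_or_pos t with h0 | h0
        · exact absurd (by rw [← hyt, h0, pow_zero]; rfl) hxy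
        · exact h0
      have hP1 : ρ.IsCycleOn (part1 s x t) := by
        have := split_isCycleOn_part1 hB hx ht0 htB
        rwa [hyt] at this
      have hP2 : ρ.IsCycleOn (part2 s x t #B) := by
        have := split_isCycleOn_part2 hB hx ht0 htB
        rwa [hyt] at this
      have hP1sub : part1 s x t ⊆ B := (part_subset hB hx).1
      have hP2sub : part2 s x t #B ⊆ B := (part_subset hB hx).2
      have hPun : part1 s x t ∪ part2 s x t #B = B := part_union hB hx htB
      have hPdis : Disjoint (part1 s x t) (part2 s x t #B) := part_disjoint hB hx ht0 htB
      have hρBc : ρ.IsCycleOn (Bᶜ : Finset (Fin (a + b))) := by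
        refine agree_isCycleOn ?_ (fun z hz => hBc.1.mapsTo hz) hBc
        intro z hz
        have hz1 : z ≠ x := fun h => (Finset.mem_compl.mp hz) (h ▸ hx)
        have hz2 : z ≠ y := fun h => (Finset.mem_compl.mp hz) (h ▸ hy)
        simp [hρ, Perm.mul_apply, swap_apply_of_ne_of_ne hz1 hz2]
      have hdis1 : Disjoint (part1 s x t) (Bᶜ : Finset (Fin (a + b))) :=
        disjoint_compl_right.mono_left hP1sub
      have hdis2 : Disjoint (part2 s x t #B) (Bᶜ : Finset (Fin (a + b))) :=
        disjoint_compl_right.mono_left hP2sub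
      obtain ⟨z3, hz3⟩ : (Bᶜ : Finset (Fin (a + b))).Nonempty :=
        Finset.card_pos.mp (by omega)
      have hu'P : u' ∈ part1 s x t ∪ part2 s x t #B := by rw [hPun]; exact hu'B
      have hv'P : v' ∈ part1 s x t ∪ part2 s x t #B := by rw [hPun]; exact hv'B
      rcases Finset.mem_union.mp hu'P with hu1 | hu2 <;>
        rcases Finset.mem_union.mp hv'P with hv1 | hv2
      · exact same_class_contra hc hP1 hρBc hdis1 hu1 hv1 hne hz3 hC
      · -- merged P1 ∪ P2 = B
        have hMB : (ρ * swap u' v').IsCycleOn (B : Finset (Fin (a + b))) := by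
          have := merge_isCycleOn hP1 hP2 hPdis hu1 hv2
          rwa [hPun] at this
        have hMBc : (ρ * swap u' v').IsCycleOn (Bᶜ : Finset (Fin (a + b))) := by
          refine agree_isCycleOn ?_ (fun z hz => hρBc.1.mapsTo hz) hρBc
          intro z hz
          have hz1 : z ≠ u' := fun h => (Finset.mem_compl.mp hz) (h ▸ hu'B)
          have hz2 : z ≠ v' := fun h => (Finset.mem_compl.mp hz) (h ▸ hv'B)
          simp [Perm.mul_apply, swap_apply_of_ne_of_ne hz1 hz2]
        obtain ⟨hCcard, hCc, -⟩ := labelled_iff.mp hC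
        obtain ⟨z₀, hz₀⟩ := Finset.card_pos.mp (hCcard ▸ hc)
        by_cases hz₀B : z₀ ∈ B
        · have : C = B := class_eq hCc hMB hz₀ hz₀B
          rw [this] at hCcard; omega
        · have : C = Bᶜ := class_eq hCc hMBc hz₀ (Finset.mem_compl.mpr hz₀B)
          rw [this] at hCcard; omega
      · -- merged P2 ∪ P1 = B
        have hMB : (ρ * swap u' v').IsCycleOn (B : Finset (Fin (a + b))) := by
          have := merge_isCycleOn hP2 hP1 hPdis.symm hu2 hv1
          rwa [Finset.union_comm, hPun] at this
        have hMBc : (ρ * swap u' v').IsCycleOn (Bᶜ : Finset (Fin (a + b))) := by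
          refine agree_isCycleOn ?_ (fun z hz => hρBc.1.mapsTo hz) hρBc
          intro z hz
          have hz1 : z ≠ u' := fun h => (Finset.mem_compl.mp hz) (h ▸ hu'B)
          have hz2 : z ≠ v' := fun h => (Finset.mem_compl.mp hz) (h ▸ hv'B)
          simp [Perm.mul_apply, swap_apply_of_ne_of_ne hz1 hz2]
        obtain ⟨hCcard, hCc, -⟩ := labelled_iff.mp hC
        obtain ⟨z₀, hz₀⟩ := Finset.card_pos.mp (hCcard ▸ hc)
        by_cases hz₀B : z₀ ∈ B
        · have : C = B := class_eq hCc hMB hz₀ hz₀B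
          rw [this] at hCcard; omega
        · have : C = Bᶜ := class_eq hCc hMBc hz₀ (Finset.mem_compl.mpr hz₀B)
          rw [this] at hCcard; omega
      · exact same_class_contra hc hP2 hρBc hdis2 hu2 hv2 hne hz3 hC
    · -- u' in, v' out
      exact case2_main hc hB hcB hcBc hBc hx hy hxy hu'B (Finset.mem_compl.mpr hv'B) hC
  · by_cases hv'B : v' ∈ B
    · -- u' out, v' in
      rw [swap_comm u' v'] at hC
      obtain ⟨u, hu, k, hk, w, hw, e1, e2⟩ :=
        case2_main hc hB hcB hcBc hBc hx hy hxy hv'B (Finset.mem_compl.mpr hu'B) hC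
      exact ⟨u, hu, k, hk, w, hw, e1, by rw [swap_comm u' v', e2]⟩
    · -- both out : contradiction
      exfalso
      obtain ⟨t, htB, hyt⟩ := hB.exists_pow_eq hx hy
      have ht0 : 0 < t := by
        rcases Nat.eq_zero_or_pos t with h0 | h0
        · exact absurd (by rw [← hyt, h0, pow_zero]; rfl) hxy
        · exact h0
      have hP1 : ρ.IsCycleOn (part1 s x t) := by
        have := split_isCycleOn_part1 hB hx ht0 htB
        rwa [hyt] at this
      have hP1sub : part1 s x t ⊆ B := (part_subset hB hx).1
      have hρBc : ρ.IsCycleOn (Bᶜ : Finset (Fin (a + b))) := by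
        refine agree_isCycleOn ?_ (fun z hz => hBc.1.mapsTo hz) hBc
        intro z hz
        have hz1 : z ≠ x := fun h => (Finset.mem_compl.mp hz) (h ▸ hx)
        have hz2 : z ≠ y := fun h => (Finset.mem_compl.mp hz) (h ▸ hy)
        simp [hρ, Perm.mul_apply, swap_apply_of_ne_of_ne hz1 hz2]
      have hdis : Disjoint (Bᶜ : Finset (Fin (a + b))) (part1 s x t) :=
        (disjoint_compl_right.mono_left hP1sub).symm
      have hyP1 : y ∈ part1 s x t := hyt ▸ mem_part1_self ht0
      exact same_class_contra hc hρBc hP1 hdis (Finset.mem_compl.mpr hu'B)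
        (Finset.mem_compl.mpr hv'B) hne hyP1 hC

lemma phi2_injOn (hc : 0 < c) {B : Finset (Fin (a + b))}
    (hB : σ₁⁻¹.IsCycleOn B) (hcB : c < #B) :
    Set.InjOn (fun r : Fin (a + b) × ℕ × Fin (a + b) =>
      ((swap r.1 ((σ₁⁻¹ ^ c) r.1),
        swap (((σ₁⁻¹ * swap r.1 ((σ₁⁻¹ ^ c) r.1)) ^ r.2.1) r.1) r.2.2) :
        Perm (Fin (a + b)) × Perm (Fin (a + b))))
      (B ×ˢ (Finset.range (#B - c) ×ˢ (Bᶜ : Finset (Fin (a + b))))) := by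
  set s : Perm (Fin (a + b)) := σ₁⁻¹ with hsdef
  rintro ⟨u, k, w⟩ hm ⟨u₂, k₂, w₂⟩ hm₂ heq
  simp only [Finset.coe_product, Set.mem_prod, Finset.mem_coe, Finset.coe_range,
    Set.mem_Iio] at hm hm₂
  obtain ⟨hu, hk, hw⟩ := hm
  obtain ⟨hu₂, hk₂, hw₂⟩ := hm₂
  have h1 : swap u ((s ^ c) u) = swap u₂ ((s ^ c) u₂) := congrArg Prod.fst heq
  have h2 : swap (((s * swap u ((s ^ c) u)) ^ k) u) w =
      swap (((s * swap u₂ ((s ^ c) u₂)) ^ k₂) u₂) w₂ := congrArg Prod.snd heq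
  have hne : u ≠ (s ^ c) u := (pow_ne_self hB hu hc hcB).symm
  have hP1 : (s * swap u₂ ((s ^ c) u₂)).IsCycleOn (part1 s u₂ c) :=
    split_isCycleOn_part1 hB hu₂ hc hcB
  have hP2 : (s * swap u₂ ((s ^ c) u₂)).IsCycleOn (part2 s u₂ c #B) :=
    split_isCycleOn_part2 hB hu₂ hc hcB
  have hPdis : Disjoint (part1 s u₂ c) (part2 s u₂ c #B) := part_disjoint hB hu₂ hc hcB
  have hP1sub : part1 s u₂ c ⊆ B := (part_subset hB hu₂).1
  have hP2sub : part2 s u₂ c #B ⊆ B := (part_subset hB hu₂).2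
  have hu₂P2 : u₂ ∈ part2 s u₂ c #B := mem_part2_self hB hu₂ hcB
  rcases swap_eq_swap_cases hne h1 with ⟨e1, e2⟩ | ⟨e1, e2⟩
  · -- u = u₂
    subst e1
    rw [h1] at h2
    have hρu : ((s * swap u ((s ^ c) u)) ^ k) u ∈ part2 s u c #B := by
      rw [h1]
      exact mapsTo_pow (fun z hz => hP2.1.mapsTo hz) k u hu₂P2
    have hρu₂ : ((s * swap u ((s ^ c) u)) ^ k₂) u ∈ part2 s u c #B := by
      rw [h1]
      exact mapsTo_pow (fun z hz => hP2.1.mapsTo hz) k₂ u hu₂P2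
    have hneq2 : ((s * swap u ((s ^ c) u)) ^ k) u ≠ w := by
      rw [h1]
      exact fun h => (Finset.mem_compl.mp hw) (h ▸ hP2sub (h ▸ hρu))
    rw [← h1] at hρu hρu₂
    have hneq2' : ((s * swap u ((s ^ c) u)) ^ k) u ≠ w :=
      fun h => (Finset.mem_compl.mp hw) (h ▸ hP2sub (by rw [← h1] at hρu ⊢; exact hρu))
    rcases swap_eq_swap_cases hneq2' h2 with ⟨f1, f2⟩ | ⟨f1, f2⟩
    · -- k = k₂, w = w₂
      have hkk : k = k₂ := by
        have hc2 : #(part2 s u c #B) = #B - c := part2_card hB hu₂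
        refine pow_window_inj hP2 hu₂P2 (by omega) (by omega) ?_
        rw [← h1]
        exact f1
      rw [hkk, f2]
    · exfalso
      apply Finset.mem_compl.mp hw₂
      rw [← f1]
      exact hP2sub hρu
  · -- u = (s^c) u₂ : cross case, contradiction via disjoint parts
    exfalso
    have hswap : swap u ((s ^ c) u) = swap u₂ ((s ^ c) u₂) := h1
    have huP1 : u ∈ part1 s u₂ c := e1 ▸ mem_part1_self hc
    have hρuP1 : ((s * swap u₂ ((s ^ c) u₂)) ^ k) u ∈ part1 s u₂ c :=
      mapsTo_pow (fun z hz => hP1.1.mapsTo hz) k u huP1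
    have hρu₂P2 : ((s * swap u₂ ((s ^ c) u₂)) ^ k₂) u₂ ∈ part2 s u₂ c #B :=
      mapsTo_pow (fun z hz => hP2.1.mapsTo hz) k₂ u₂ hu₂P2
    rw [hswap] at h2
    have hneq2 : ((s * swap u₂ ((s ^ c) u₂)) ^ k) u ≠ w :=
      fun h => (Finset.mem_compl.mp hw) (h ▸ hP1sub hρuP1)
    rcases swap_eq_swap_cases hneq2 h2 with ⟨f1, f2⟩ | ⟨f1, f2⟩
    · exact Finset.disjoint_left.mp hPdis (f1 ▸ hρuP1) hρu₂P2
    · exact Finset.mem_compl.mp hw₂ (hP1sub (f1 ▸ hρuP1))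

theorem pairSet_card (ha : 0 < a) (hb : 0 < b) (hc : 0 < c) (hd : 0 < d)
    (hsum : a + b = c + d) (hca : c < a) (hcb : c < b)
    (hlab : IsLabelledTwoCycle (a + b) a σ₁ A) :
    #(pairSet (a + b) c σ₁) = a * b * (2 * d) := by
  classical
  obtain ⟨hcard, hcA', hcAc'⟩ := labelled_iff.mp hlab
  have hsA : σ₁⁻¹.IsCycleOn (A : Set (Fin (a + b))) := isCycleOn_inv.mpr hcA'
  have hsAc : σ₁⁻¹.IsCycleOn ((Aᶜ : Finset (Fin (a + b))) : Set (Fin (a + b))) :=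
    isCycleOn_inv.mpr hcAc'
  have hcardc : #(Aᶜ : Finset (Fin (a + b))) = b := compl_card hcard
  have hAcc : ((Aᶜ : Finset (Fin (a + b)))ᶜ : Finset (Fin (a + b))) = A := compl_compl A
  have hsAcc : σ₁⁻¹.IsCycleOn (((Aᶜ : Finset (Fin (a + b)))ᶜ : Finset (Fin (a + b))) :
      Set (Fin (a + b))) := by rw [hAcc]; exact hsA
  have hcAcc : c < #((Aᶜ : Finset (Fin (a + b)))ᶜ : Finset (Fin (a + b))) := by
    rw [hAcc]; omega
  set s : Perm (Fin (a + b)) := σ₁⁻¹ with hsdef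
  have hpowA : ∀ (j : ℕ), ∀ z ∈ A, (s ^ j) z ∈ A :=
    fun j z hz => mapsTo_pow (fun w hw => hsA.1.mapsTo hw) j z hz
  have hpowAc : ∀ (j : ℕ), ∀ z ∈ (Aᶜ : Finset (Fin (a + b))), (s ^ j) z ∈
      (Aᶜ : Finset (Fin (a + b))) :=
    fun j z hz => mapsTo_pow (fun w hw => hsAc.1.mapsTo hw) j z hz
  set Φ1 : Fin (a + b) × Fin (a + b) × Fin (a + b) → Perm (Fin (a + b)) × Perm (Fin (a + b)) :=
    fun r => (swap r.1 r.2.1, swap r.2.2 (((s * swap r.1 r.2.1) ^ c) r.2.2)) with hΦ1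
  set Φ2 : Fin (a + b) × ℕ × Fin (a + b) → Perm (Fin (a + b)) × Perm (Fin (a + b)) :=
    fun r => (swap r.1 ((s ^ c) r.1),
      swap (((s * swap r.1 ((s ^ c) r.1)) ^ r.2.1) r.1) r.2.2) with hΦ2
  set I1 := Finset.image Φ1 (A ×ˢ ((Aᶜ : Finset (Fin (a + b))) ×ˢ Finset.univ)) with hI1
  set I2 := Finset.image Φ2 (A ×ˢ (Finset.range (a - c) ×ˢ (Aᶜ : Finset (Fin (a + b)))))
    with hI2
  set I3 := Finset.image Φ2 ((Aᶜ : Finset (Fin (a + b))) ×ˢ (Finset.range (b - c) ×ˢ A))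
    with hI3
  -- the partition
  have hset : pairSet (a + b) c σ₁ = I1 ∪ (I2 ∪ I3) := by
    apply Finset.Subset.antisymm
    · rintro ⟨τ₁, τ₂⟩ hp
      rw [mem_pairSet] at hp
      obtain ⟨hτ₁, hτ₂, ⟨C, hC⟩, -⟩ := hp
      obtain ⟨x, y, hxy, rfl⟩ := hτ₁
      by_cases hxA : x ∈ A <;> by_cases hyA : y ∈ A
      · -- both in A : case 2a
        obtain ⟨u, hu, k, hk, w, hw, e1, e2⟩ :=
          case2_classify hc hsA hsAc (by omega) (by omega) hxA hyA hxy hτ₂ hC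
        apply Finset.mem_union_right
        apply Finset.mem_union_left
        refine Finset.mem_image.mpr ⟨(u, k, w), ?_, ?_⟩
        · rw [Finset.mem_product, Finset.mem_product]
          exact ⟨hu, Finset.mem_range.mpr (by omega : k < a - c), hw⟩
        · rw [hΦ2]
          exact Prod.ext (by rw [e1]) (by rw [e2])
      · -- x ∈ A, y ∉ A : case 1
        obtain ⟨u, e2⟩ := case1_classify hc (by omega) hlab hxA (Finset.mem_compl.mpr hyA)
          hτ₂ hC
        apply Finset.mem_union_left
        refine Finset.mem_image.mpr ⟨(x, y, u), ?_, ?_⟩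
        · rw [Finset.mem_product, Finset.mem_product]
          exact ⟨hxA, Finset.mem_compl.mpr hyA, Finset.mem_univ u⟩
        · rw [hΦ1]
          exact Prod.ext rfl (by rw [e2])
      · -- x ∉ A, y ∈ A : case 1 reversed
        have hC' : IsLabelledTwoCycle (a + b) c ((τ₂ * swap y x * σ₁)⁻¹) C := by
          rwa [swap_comm y x]
        obtain ⟨u, e2⟩ := case1_classify hc (by omega) hlab hyA (Finset.mem_compl.mpr hxA)
          hτ₂ hC'
        apply Finset.mem_union_left
        refine Finset.mem_image.mpr ⟨(y, x, u), ?_, ?_⟩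
        · rw [Finset.mem_product, Finset.mem_product]
          exact ⟨hyA, Finset.mem_compl.mpr hxA, Finset.mem_univ u⟩
        · rw [hΦ1]
          refine Prod.ext ((swap_comm x y).symm) ?_
          rw [e2]
      · -- both outside A : case 2b
        obtain ⟨u, hu, k, hk, w, hw, e1, e2⟩ :=
          case2_classify hc hsAc hsAcc (by omega) hcAcc (Finset.mem_compl.mpr hxA)
            (Finset.mem_compl.mpr hyA) hxy hτ₂ hC
        apply Finset.mem_union_right
        apply Finset.mem_union_right
        refine Finset.mem_image.mpr ⟨(u, k, w), ?_, ?_⟩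
        · rw [Finset.mem_product, Finset.mem_product]
          refine ⟨hu, Finset.mem_range.mpr (by rw [hcardc] at hk; omega : k < b - c), ?_⟩
          rwa [hAcc] at hw
        · rw [hΦ2]
          exact Prod.ext (by rw [e1]) (by rw [e2])
    · intro p hp
      rcases Finset.mem_union.mp hp with h1 | h23
      · obtain ⟨⟨x, y, u⟩, hmem, rfl⟩ := Finset.mem_image.mp h1
        rw [Finset.mem_product, Finset.mem_product] at hmem
        exact case1_mem ha hb hc hca hlab hmem.1 hmem.2.1 u
      rcases Finset.mem_union.mp h23 with h2 | h3
      · obtain ⟨⟨u, k, w⟩, hmem, rfl⟩ := Finset.mem_image.mp h2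
        rw [Finset.mem_product, Finset.mem_product] at hmem
        exact case2_mem hc hlab hsA hsAc (by omega) hmem.1 hmem.2.2
          (by rw [hcard]; exact Finset.mem_range.mp hmem.2.1)
      · obtain ⟨⟨u, k, w⟩, hmem, rfl⟩ := Finset.mem_image.mp h3
        rw [Finset.mem_product, Finset.mem_product] at hmem
        have hw' : w ∈ ((Aᶜ : Finset (Fin (a + b)))ᶜ : Finset (Fin (a + b))) := by
          rw [hAcc]; exact hmem.2.2
        exact case2_mem hc hlab hsAc hsAcc (by omega) hmem.1 hw'
          (by rw [hcardc]; exact Finset.mem_range.mp hmem.2.1)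
  -- injectivity of the case-1 parametrisation
  have hinj1 : Set.InjOn Φ1 (A ×ˢ ((Aᶜ : Finset (Fin (a + b))) ×ˢ Finset.univ)) := by
    rintro ⟨x, y, u⟩ hm ⟨x₂, y₂, u₂⟩ hm₂ heq
    simp only [Finset.coe_product, Set.mem_prod, Finset.mem_coe] at hm hm₂
    obtain ⟨hx, hy, -⟩ := hm
    obtain ⟨hx₂, hy₂, -⟩ := hm₂
    have h1 : swap x y = swap x₂ y₂ := congrArg Prod.fst heq
    have hxy : x ≠ y := fun h => (Finset.mem_compl.mp hy) (h ▸ hx)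
    obtain ⟨e1, e2⟩ : x = x₂ ∧ y = y₂ := by
      rcases swap_eq_swap_cases hxy h1 with h | ⟨f1, f2⟩
      · exact h
      · exact absurd (f1 ▸ hx) (Finset.mem_compl.mp hy₂)
    subst e1; subst e2
    have h2 : swap u (((s * swap x y) ^ c) u) = swap u₂ (((s * swap x y) ^ c) u₂) :=
      congrArg Prod.snd heq
    have hρu : (s * swap x y).IsCycleOn (Finset.univ : Finset (Fin (a + b))) :=
      rho_cycleOn_univ hlab hx hy
    have hcn : c < #(Finset.univ : Finset (Fin (a + b))) := by rw [card_univ_fin]; omega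
    have hne : u ≠ ((s * swap x y) ^ c) u :=
      (pow_ne_self hρu (Finset.mem_univ u) hc hcn).symm
    rcases swap_eq_swap_cases hne h2 with ⟨f1, f2⟩ | ⟨f1, f2⟩
    · rw [f1]
    · exfalso
      have : ((s * swap x y) ^ (c + c)) u₂ = u₂ := by
        rw [pow_add, Perm.mul_apply, ← f1, ← f2]
      have hdvd := (hρu.pow_apply_eq (Finset.mem_univ u₂)).mp this
      rw [card_univ_fin] at hdvd
      have := Nat.le_of_dvd (by omega) hdvd
      omega
  -- disjointness of the three families
  have hd23 : Disjoint I2 I3 := by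
    rw [Finset.disjoint_left]
    rintro p h2 h3
    obtain ⟨⟨u, k, w⟩, hmem, rfl⟩ := Finset.mem_image.mp h2
    obtain ⟨⟨u₂, k₂, w₂⟩, hmem₂, hval⟩ := Finset.mem_image.mp h3
    rw [Finset.mem_product, Finset.mem_product] at hmem hmem₂
    have h1 : swap u₂ ((s ^ c) u₂) = swap u ((s ^ c) u) := congrArg Prod.fst hval
    have hu : u ∈ A := hmem.1
    have hu₂ : u₂ ∈ (Aᶜ : Finset (Fin (a + b))) := hmem₂.1
    have hne : u₂ ≠ (s ^ c) u₂ := (pow_ne_self hsAc hu₂ hc (by omega)).symm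
    rcases swap_eq_swap_cases hne h1 with ⟨f1, -⟩ | ⟨f1, -⟩
    · rw [f1] at hu₂
      exact Finset.mem_compl.mp hu₂ hu
    · rw [f1] at hu₂
      exact Finset.mem_compl.mp hu₂ (hpowA c u hu)
  have hd123 : Disjoint I1 (I2 ∪ I3) := by
    rw [Finset.disjoint_left]
    rintro p h1 h23
    obtain ⟨⟨x, y, u⟩, hmem, rfl⟩ := Finset.mem_image.mp h1
    rw [Finset.mem_product, Finset.mem_product] at hmem
    have hx : x ∈ A := hmem.1
    have hy : y ∈ (Aᶜ : Finset (Fin (a + b))) := hmem.2.1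
    have hxy : x ≠ y := fun h => (Finset.mem_compl.mp hy) (h ▸ hx)
    rcases Finset.mem_union.mp h23 with h2 | h3
    · obtain ⟨⟨u₂, k₂, w₂⟩, hmem₂, hval⟩ := Finset.mem_image.mp h2
      rw [Finset.mem_product, Finset.mem_product] at hmem₂
      have hu₂ : u₂ ∈ A := hmem₂.1
      have heq : swap x y = swap u₂ ((s ^ c) u₂) := (congrArg Prod.fst hval).symm
      rcases swap_eq_swap_cases hxy heq with ⟨-, f2⟩ | ⟨-, f2⟩
      · rw [f2] at hy
        exact Finset.mem_compl.mp hy (hpowA c u₂ hu₂)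
      · rw [f2] at hy
        exact Finset.mem_compl.mp hy hu₂
    · obtain ⟨⟨u₂, k₂, w₂⟩, hmem₂, hval⟩ := Finset.mem_image.mp h3
      rw [Finset.mem_product, Finset.mem_product] at hmem₂
      have hu₂ : u₂ ∈ (Aᶜ : Finset (Fin (a + b))) := hmem₂.1
      have heq : swap x y = swap u₂ ((s ^ c) u₂) := (congrArg Prod.fst hval).symm
      rcases swap_eq_swap_cases hxy heq with ⟨f1, -⟩ | ⟨f1, -⟩
      · rw [f1] at hx
        exact Finset.mem_compl.mp hu₂ hx
      · rw [f1] at hx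
        exact Finset.mem_compl.mp (hpowAc c u₂ hu₂) hx
  -- cardinalities
  have hc1 : #I1 = a * (b * (a + b)) := by
    rw [← Finset.coe_product, ← Finset.coe_product] at hinj1
    rw [hI1, Finset.card_image_of_injOn hinj1, Finset.card_product, Finset.card_product,
      hcard, hcardc, card_univ_fin]
  have hc2 : #I2 = a * ((a - c) * b) := by
    have h2i := phi2_injOn (σ₁ := σ₁) hc hsA (by omega : c < #A)
    rw [hcard] at h2i
    rw [← Finset.coe_product, ← Finset.coe_product] at h2i
    rw [hI2, Finset.card_image_of_injOn h2i, Finset.card_product, Finset.card_product,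
      hcard, hcardc, Finset.card_range]
  have hc3 : #I3 = b * ((b - c) * a) := by
    have h2i := phi2_injOn (σ₁ := σ₁) hc hsAc (by omega : c < #(Aᶜ : Finset (Fin (a + b))))
    rw [hcardc, hAcc] at h2i
    rw [← Finset.coe_product, ← Finset.coe_product] at h2i
    rw [hI3, Finset.card_image_of_injOn h2i, Finset.card_product, Finset.card_product,
      hcard, hcardc, Finset.card_range]
  rw [hset, Finset.card_union_of_disjoint hd123, Finset.card_union_of_disjoint hd23,
    hc1, hc2, hc3]
  -- arithmetic
  obtain ⟨a₁, rfl⟩ : ∃ a₁, a = c + a₁ := ⟨a - c, by omega⟩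
  obtain ⟨b₁, rfl⟩ : ∃ b₁, b = c + b₁ := ⟨b - c, by omega⟩
  obtain ⟨rfl⟩ : d = a₁ + b₁ + c := by omega
  simp only [Nat.add_sub_cancel_left]
  ring

end Count

/-! ### Final assembly -/

section Final

variable {a b c d : ℕ}

lemma fiber_eq_pairSet (hc : 0 < c) (hca : c < a) (hcb : c < b) (hsum : a + b = c + d)
    {l : Perm (Fin (a + b)) × Finset (Fin (a + b))} (hl : l ∈ LFin a b) :
    #(((HurwitzTuplesTwoPart a b c d).toFinset).filter (fun t => t.1 = l)) =
      #(pairSet (a + b) c l.1) := by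
  classical
  have h2c : 2 * c < a + b := by omega
  refine Finset.card_bij' (fun t _ => (t.2.1, t.2.2.1))
    (fun p hp => (l, (p.1, (p.2, ((p.2 * p.1 * l.1)⁻¹,
      Exists.choose (mem_pairSet.mp hp).2.2.1))))) ?_ ?_ ?_ ?_
  · -- i maps into pairSet
    intro t ht
    obtain ⟨htT, ht1⟩ := Finset.mem_filter.mp ht
    rw [Set.mem_toFinset] at htT
    obtain ⟨hlab1, hlab2, hsw1, hsw2, heq, htrans⟩ := htT
    have h11 : t.1.1 = l.1 := congrArg Prod.fst ht1
    have hσ₂ : t.2.2.2.1 = (t.2.2.1 * t.2.1 * t.1.1)⁻¹ := by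
      have hmul : t.2.2.2.1 * (t.2.2.1 * t.2.1 * t.1.1) = 1 := by
        rw [← mul_assoc, ← mul_assoc]; exact heq
      exact eq_inv_of_mul_eq_one_left hmul
    rw [h11] at hσ₂
    show (t.2.1, t.2.2.1) ∈ pairSet (a + b) c l.1
    rw [mem_pairSet]
    refine ⟨hsw1, hsw2, ⟨t.2.2.2.2, ?_⟩, ?_⟩
    · rw [← hσ₂]; exact hlab2
    · rw [hσ₂, h11] at htrans
      exact htrans
  · -- j maps into the fiber
    intro p hp
    obtain ⟨hsw1, hsw2, ⟨C, hC⟩, htrans⟩ := mem_pairSet.mp hp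
    rw [Finset.mem_filter]
    constructor
    · rw [Set.mem_toFinset]
      refine ⟨mem_LFin.mp hl, Exists.choose_spec (mem_pairSet.mp hp).2.2.1, hsw1, hsw2, ?_, ?_⟩
      · show (p.2 * p.1 * l.1)⁻¹ * p.2 * p.1 * l.1 = 1
        group
      · exact htrans
    · rfl
  · -- left inverse
    intro t ht
    obtain ⟨htT, ht1⟩ := Finset.mem_filter.mp ht
    rw [Set.mem_toFinset] at htT
    obtain ⟨hlab1, hlab2, hsw1, hsw2, heq, htrans⟩ := htT
    have h11 : t.1.1 = l.1 := congrArg Prod.fst ht1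
    have hσ₂ : t.2.2.2.1 = (t.2.2.1 * t.2.1 * t.1.1)⁻¹ := by
      have hmul : t.2.2.2.1 * (t.2.2.1 * t.2.1 * t.1.1) = 1 := by
        rw [← mul_assoc, ← mul_assoc]; exact heq
      exact eq_inv_of_mul_eq_one_left hmul
    rw [h11] at hσ₂
    have hmemp : (t.2.1, t.2.2.1) ∈ pairSet (a + b) c l.1 := by
      rw [mem_pairSet]
      refine ⟨hsw1, hsw2, ⟨t.2.2.2.2, by rw [← hσ₂]; exact hlab2⟩, ?_⟩
      rw [hσ₂, h11] at htrans
      exact htrans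
    have hCun : Exists.choose (mem_pairSet.mp hmemp).2.2.1 = t.2.2.2.2 := by
      have hspec := Exists.choose_spec (mem_pairSet.mp hmemp).2.2.1
      refine labelled_snd_unique hspec ?_ hc h2c
      rw [← hσ₂]; exact hlab2
    refine Prod.ext ht1.symm (Prod.ext rfl (Prod.ext rfl (Prod.ext ?_ ?_)))
    · exact hσ₂.symm
    · exact hCun
  · -- right inverse
    intro p hp
    rfl

theorem hurwitz_count (ha : 0 < a) (hb : 0 < b) (hc : 0 < c) (hd : 0 < d)
    (hsum : a + b = c + d) (hca : c < a) (hcb : c < b) :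
    Nat.card (HurwitzTuplesTwoPart a b c d) = 2 * d * Nat.factorial (a + b) := by
  classical
  rw [Nat.card_eq_card_toFinset]
  have hfib : ∀ t ∈ (HurwitzTuplesTwoPart a b c d).toFinset,
      (t.1 : Perm (Fin (a + b)) × Finset (Fin (a + b))) ∈ LFin a b := by
    intro t ht
    rw [Set.mem_toFinset] at ht
    exact mem_LFin.mpr ht.1
  rw [Finset.card_eq_sum_card_fiberwise hfib]
  have hstep : ∀ l ∈ LFin a b,
      #(((HurwitzTuplesTwoPart a b c d).toFinset).filter (fun t => t.1 = l)) =
        a * b * (2 * d) := by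
    intro l hl
    rw [fiber_eq_pairSet hc hca hcb hsum hl,
      pairSet_card ha hb hc hd hsum hca hcb (mem_LFin.mp hl)]
  rw [Finset.sum_congr rfl hstep, Finset.sum_const, smul_eq_mul]
  have hLm := LFin_mul (a := a) (b := b) ha hb
  calc #(LFin a b) * (a * b * (2 * d)) = #(LFin a b) * (a * b) * (2 * d) := by ring
    _ = Nat.factorial (a + b) * (2 * d) := by rw [hLm]
    _ = 2 * d * Nat.factorial (a + b) := by ring

end Final

/-- in the chamber `c < a, c < b` (with `a + b = c + d`), the
genus-0 two-part double Hurwitz number is `H_0((a,b),(c,d)) = 2d`. -/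
theorem double_hurwitz_two_part (a b c d : ℕ) (ha : 0 < a) (hb : 0 < b)
    (hc : 0 < c) (hd : 0 < d) (hsum : a + b = c + d) (hca : c < a) (hcb : c < b) :
    (Nat.card (HurwitzTuplesTwoPart a b c d) : ℚ) / Nat.factorial (a + b) = 2 * d := by
  rw [hurwitz_count ha hb hc hd hsum hca hcb]
  have hfac : (Nat.factorial (a + b) : ℚ) ≠ 0 := Nat.cast_ne_zero.mpr (Nat.factorial_ne_zero _)
  push_cast
  field_simp
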